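/- arXiv:0810.3578 — 4 statements merged into one kernel-verified Lean document; each statement's English description precedes it below -/
import Mathlib

section
/- For square k×k matrices A and B over a commutative ring, det(A+B) equals the sum over i from 0 to k and over all pairs of increasing subsequences a = (a₁<...<a_i) and b = (b₁<...<b_i) of {1,...,k}, of (−1)^{∑a_j − ∑b_j} times det(A_a^b) times det(B_{a'}^{b'}), where A_a^b is the submatrix of A with rows a and columns b, and a', b' are the complementary increasing subsequences. -/
open Finset

section DetAddAux

open Equiv Equiv.Perm

section Aux

theorem my_sign_eq_signAux {n : ℕ} (σ : Equiv.Perm (Fin n)) :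
    Equiv.Perm.sign σ = Equiv.Perm.signAux σ := by
  refine Equiv.Perm.swap_induction_on σ (by simp [Equiv.Perm.signAux_one]) ?_
  intro f x y hxy ih
  rw [Equiv.Perm.signAux_mul, Equiv.Perm.sign_mul, ih, Equiv.Perm.sign_swap hxy,
    Equiv.Perm.signAux_swap hxy]

theorem my_signAux_eq_pow {n : ℕ} (σ : Equiv.Perm (Fin n)) :
    Equiv.Perm.signAux σ =
      (-1 : ℤˣ) ^ #((Equiv.Perm.finPairsLT n).filter fun x => σ x.1 ≤ σ x.2) := by
  rw [Equiv.Perm.signAux, Finset.prod_ite, Finset.prod_const, Finset.prod_const_one, mul_one]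

lemma card_filter_emb_lt {k m : ℕ} (u : Finset (Fin k)) (hu : #u = m) (c : Fin k) :
    #((univ : Finset (Fin m)).filter fun b => u.orderEmbOfFin hu b < c)
      = #(u.filter (· < c)) := by
  apply Finset.card_bij (fun b _ => u.orderEmbOfFin hu b)
  · intro b hb
    simp only [mem_filter, mem_univ, true_and] at hb ⊢
    exact ⟨u.orderEmbOfFin_mem hu b, hb⟩
  · intro b1 _ b2 _ h
    exact (u.orderEmbOfFin hu).injective h
  · intro x hx
    simp only [mem_filter] at hx
    have : x ∈ Set.range (u.orderEmbOfFin hu) := by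
      rw [Finset.range_orderEmbOfFin]; exact hx.1
    obtain ⟨b, hb⟩ := this
    exact ⟨b, by simp [hb, hx.2], hb⟩

lemma card_filter_lt_orderEmb {k m : ℕ} (u : Finset (Fin k)) (hu : #u = m) (a : Fin m) :
    #(u.filter (· < u.orderEmbOfFin hu a)) = (a : ℕ) := by
  have : u.filter (· < u.orderEmbOfFin hu a)
      = (Finset.Iio a).map (u.orderEmbOfFin hu).toEmbedding := by
    ext x
    simp only [Finset.mem_map, Finset.mem_Iio, mem_filter, RelEmbedding.coe_toEmbedding]
    constructor
    · rintro ⟨hxu, hxa⟩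
      have : x ∈ Set.range (u.orderEmbOfFin hu) := by
        rw [Finset.range_orderEmbOfFin]; exact hxu
      obtain ⟨b, hb⟩ := this
      refine ⟨b, ?_, hb⟩
      rw [← hb] at hxa
      exact (OrderEmbedding.lt_iff_lt _).mp hxa
    · rintro ⟨b, hba, rfl⟩
      exact ⟨u.orderEmbOfFin_mem hu b, (OrderEmbedding.lt_iff_lt _).mpr hba⟩
  rw [this, Finset.card_map, Fin.card_Iio]

lemma key_count {k i m : ℕ} (s : Finset (Fin k)) (hs : #s = i) (hs' : #sᶜ = m) (a : Fin i) :
    (a : ℕ) + #((univ : Finset (Fin m)).filter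
        fun b => sᶜ.orderEmbOfFin hs' b < s.orderEmbOfFin hs a)
      = (s.orderEmbOfFin hs a : ℕ) := by
  rw [card_filter_emb_lt, ← card_filter_lt_orderEmb s hs a]
  set c := s.orderEmbOfFin hs a with hc
  have hdisj : Disjoint (s.filter (· < c)) (sᶜ.filter (· < c)) :=
    Finset.disjoint_filter_filter (disjoint_compl_right)
  have hunion : s.filter (· < c) ∪ sᶜ.filter (· < c) = Finset.Iio c := by
    rw [← Finset.filter_union, Finset.union_compl]
    ext x; simp
  have h2 := Finset.card_union_of_disjoint hdisj
  rw [hunion, Fin.card_Iio] at h2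
  omega

def stdEquiv {k i m : ℕ} (him : i + m = k) : (Fin i ⊕ Fin m) ≃ Fin k :=
  finSumFinEquiv.trans (finCongr him)

lemma stdEquiv_inl_val {k i m : ℕ} (him : i + m = k) (a : Fin i) :
    ((stdEquiv him) (Sum.inl a) : ℕ) = a := by
  simp [stdEquiv]

lemma stdEquiv_inr_val {k i m : ℕ} (him : i + m = k) (b : Fin m) :
    ((stdEquiv him) (Sum.inr b) : ℕ) = i + b := by
  simp [stdEquiv]

lemma count_inversions {k i m : ℕ} (him : i + m = k) (s : Finset (Fin k))
    (hs : #s = i) (hs' : #sᶜ = m) :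
    #((Equiv.Perm.finPairsLT k).filter fun x =>
        ((stdEquiv him).symm.trans (finSumEquivOfFinset hs hs')) x.1 ≤
          ((stdEquiv him).symm.trans (finSumEquivOfFinset hs hs')) x.2)
      = ∑ a : Fin i, #((univ : Finset (Fin m)).filter
          fun b => sᶜ.orderEmbOfFin hs' b < s.orderEmbOfFin hs a) := by
  set f := s.orderEmbOfFin hs with hf
  set g := sᶜ.orderEmbOfFin hs' with hg
  set E := finSumEquivOfFinset hs hs' with hE
  set std := stdEquiv him with hstd
  set ρ := std.symm.trans E with hρ
  have hρapp : ∀ z, ρ (std z) = E z := fun z => by simp [hρ]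
  rw [← Finset.card_sigma]
  apply (Finset.card_bij (fun p _ => (⟨std (Sum.inr p.2), std (Sum.inl p.1)⟩ :
      Σ _ : Fin k, Fin k)) ?_ ?_ ?_).symm
  · rintro ⟨a, b⟩ hp
    simp only [Finset.mem_sigma, mem_filter, mem_univ, true_and] at hp
    simp only [mem_filter, Equiv.Perm.mem_finPairsLT]
    constructor
    · rw [Fin.lt_iff_val_lt_val, stdEquiv_inl_val, stdEquiv_inr_val]
      exact lt_of_lt_of_le a.isLt (Nat.le_add_right _ _)
    · rw [hρapp, hρapp, hE]
      simp only [finSumEquivOfFinset_inl, finSumEquivOfFinset_inr]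
      exact le_of_lt hp
  · rintro ⟨a1, b1⟩ _ ⟨a2, b2⟩ _ h
    have h1 : std (Sum.inr b1) = std (Sum.inr b2) := congrArg Sigma.fst h
    have h2 : std (Sum.inl a1) = std (Sum.inl a2) := congrArg Sigma.snd h
    have hb : b1 = b2 := Sum.inr.inj (std.injective h1)
    have ha : a1 = a2 := Sum.inl.inj (std.injective h2)
    simp [ha, hb]
  · rintro ⟨x1, x2⟩ hx
    simp only [mem_filter, Equiv.Perm.mem_finPairsLT] at hx
    obtain ⟨hlt, hle⟩ := hx
    have hx1 : x1 = std (std.symm x1) := (std.apply_symm_apply x1).symm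
    have hx2 : x2 = std (std.symm x2) := (std.apply_symm_apply x2).symm
    rcases hz1 : std.symm x1 with a1 | b1 <;> rcases hz2 : std.symm x2 with a2 | b2 <;>
      rw [hz1] at hx1 <;> rw [hz2] at hx2
    · exfalso
      rw [hx1, hx2, hρapp, hρapp, hE] at hle
      simp only [finSumEquivOfFinset_inl] at hle
      have h1 : a1 ≤ a2 := (s.orderEmbOfFin hs).le_iff_le.mp hle
      rw [hx1, hx2, Fin.lt_iff_val_lt_val, stdEquiv_inl_val, stdEquiv_inl_val] at hlt
      exact absurd hlt (by exact_mod_cast not_lt.mpr h1)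
    · exfalso
      rw [hx1, hx2, Fin.lt_iff_val_lt_val, stdEquiv_inl_val, stdEquiv_inr_val] at hlt
      omega
    · refine ⟨⟨a2, b1⟩, ?_, ?_⟩
      · simp only [Finset.mem_sigma, mem_univ, mem_filter, true_and]
        rw [hx1, hx2, hρapp, hρapp, hE] at hle
        simp only [finSumEquivOfFinset_inl, finSumEquivOfFinset_inr] at hle
        refine lt_of_le_of_ne hle ?_
        intro hcontra
        have h1 : g b1 ∈ sᶜ := sᶜ.orderEmbOfFin_mem hs' b1
        have h2 : f a2 ∈ s := s.orderEmbOfFin_mem hs a2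
        rw [hcontra] at h1
        exact (Finset.mem_compl.mp h1) h2
      · show (⟨std (Sum.inr b1), std (Sum.inl a2)⟩ : Σ _ : Fin k, Fin k) = ⟨x1, x2⟩
        rw [hx1, hx2]
    · exfalso
      rw [hx1, hx2, hρapp, hρapp, hE] at hle
      simp only [finSumEquivOfFinset_inr] at hle
      have h1 : b1 ≤ b2 := (sᶜ.orderEmbOfFin hs').le_iff_le.mp hle
      rw [hx1, hx2, Fin.lt_iff_val_lt_val, stdEquiv_inr_val, stdEquiv_inr_val] at hlt
      have : (b2 : ℕ) < b1 := by omega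
      exact absurd (by omega : (b2:ℕ) < (b1:ℕ)) (by exact_mod_cast not_lt.mpr h1)

lemma sign_rho {k i m : ℕ} (him : i + m = k) (s : Finset (Fin k))
    (hs : #s = i) (hs' : #sᶜ = m) :
    Equiv.Perm.sign ((stdEquiv him).symm.trans (finSumEquivOfFinset hs hs'))
      = (-1 : ℤˣ) ^ (∑ j ∈ s, (j : ℕ)) * (-1 : ℤˣ) ^ (∑ a : Fin i, (a : ℕ)) := by
  rw [my_sign_eq_signAux, my_signAux_eq_pow, count_inversions him s hs hs']
  have key : (∑ a : Fin i, #((univ : Finset (Fin m)).filter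
        fun b => sᶜ.orderEmbOfFin hs' b < s.orderEmbOfFin hs a)) + ∑ a : Fin i, (a : ℕ)
      = ∑ j ∈ s, (j : ℕ) := by
    rw [← Finset.sum_add_distrib]
    have h1 : ∀ a : Fin i, #((univ : Finset (Fin m)).filter
        fun b => sᶜ.orderEmbOfFin hs' b < s.orderEmbOfFin hs a) + (a : ℕ)
        = (s.orderEmbOfFin hs a : ℕ) := fun a => by
      rw [add_comm]; exact key_count s hs hs' a
    rw [Finset.sum_congr rfl fun a _ => h1 a]
    apply Finset.sum_bij (fun (a : Fin i) _ => s.orderEmbOfFin hs a)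
    · intro a _; exact s.orderEmbOfFin_mem hs a
    · intro a1 _ a2 _ h; exact (s.orderEmbOfFin hs).injective h
    · intro x hx
      have : x ∈ Set.range (s.orderEmbOfFin hs) := by
        rw [Finset.range_orderEmbOfFin]; exact hx
      obtain ⟨a, ha⟩ := this
      exact ⟨a, mem_univ a, ha⟩
    · intro a _; rfl
  calc (-1 : ℤˣ) ^ (∑ a : Fin i, #((univ : Finset (Fin m)).filter
        fun b => sᶜ.orderEmbOfFin hs' b < s.orderEmbOfFin hs a))
      = (-1 : ℤˣ) ^ (∑ a : Fin i, #((univ : Finset (Fin m)).filter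
        fun b => sᶜ.orderEmbOfFin hs' b < s.orderEmbOfFin hs a))
        * ((-1 : ℤˣ) ^ (∑ a : Fin i, (a : ℕ)) * (-1 : ℤˣ) ^ (∑ a : Fin i, (a : ℕ))) := by
        rw [Int.units_mul_self, mul_one]
    _ = ((-1 : ℤˣ) ^ (∑ a : Fin i, #((univ : Finset (Fin m)).filter
        fun b => sᶜ.orderEmbOfFin hs' b < s.orderEmbOfFin hs a))
        * (-1 : ℤˣ) ^ (∑ a : Fin i, (a : ℕ))) * (-1 : ℤˣ) ^ (∑ a : Fin i, (a : ℕ)) := by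
        rw [mul_assoc]
    _ = (-1 : ℤˣ) ^ (∑ j ∈ s, (j : ℕ)) * (-1 : ℤˣ) ^ (∑ a : Fin i, (a : ℕ)) := by
        rw [← pow_add, key]

end Aux
lemma tcompl_card {k i m : ℕ} (him : i + m = k) {t : Finset (Fin k)}
    (ht : t ∈ (univ : Finset (Fin k)).powersetCard i) : #(tᶜ) = m := by
  rw [Finset.card_compl, (Finset.mem_powersetCard.mp ht).2, Fintype.card_fin]
  omega

lemma core {R : Type*} [CommRing R] {k i m : ℕ} (him : i + m = k)
    (A B : Matrix (Fin k) (Fin k) R) (s : Finset (Fin k)) (hs : #s = i) (hs' : #sᶜ = m) :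
    Matrix.det (s.piecewise A B)
      = ∑ t ∈ ((univ : Finset (Fin k)).powersetCard i).attach,
          (-1 : R) ^ (∑ j ∈ s, (j : ℕ)) * (-1 : R) ^ (∑ j ∈ t.1, (j : ℕ)) *
            (A.submatrix (s.orderEmbOfFin hs)
              (t.1.orderEmbOfFin ((Finset.mem_powersetCard.mp t.2).2))).det *
            (B.submatrix (sᶜ.orderEmbOfFin hs')
              ((t.1ᶜ).orderEmbOfFin (tcompl_card him t.2))).det := by
  classical
  set C : Matrix (Fin k) (Fin k) R := s.piecewise A B with hC
  set E := finSumEquivOfFinset hs hs' with hEdef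
  set std := stdEquiv him with hstd
  set T := ((univ : Finset (Fin k)).powersetCard i).attach with hT
  let et : ∀ _t : {x // x ∈ (univ : Finset (Fin k)).powersetCard i}, (Fin i ⊕ Fin m) ≃ Fin k :=
    fun t => finSumEquivOfFinset ((Finset.mem_powersetCard.mp t.2).2) (tcompl_card him t.2)
  let Ψ : (Σ _t : {x // x ∈ (univ : Finset (Fin k)).powersetCard i},
      Perm (Fin i) × Perm (Fin m)) → Perm (Fin k) :=
    fun p => ((et p.1).symm.trans (Equiv.sumCongr p.2.1 p.2.2)).trans E
  set S := T.sigma (fun _ => (univ : Finset (Perm (Fin i) × Perm (Fin m)))) with hS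
  have hΨapp : ∀ t π (z : Fin i ⊕ Fin m),
      Ψ ⟨t, π⟩ (et t z) = E (Equiv.sumCongr π.1 π.2 z) := by
    intro t π z
    simp [Ψ]
  have hmem : ∀ t (π : Perm (Fin i) × Perm (Fin m)) (x : Fin k),
      Ψ ⟨t, π⟩ x ∈ s ↔ x ∈ t.1 := by
    intro t π x
    have hx : x = et t ((et t).symm x) := ((et t).apply_symm_apply x).symm
    rcases hz : (et t).symm x with a | b
    · rw [hx, hz]
      have h1 : et t (Sum.inl a) ∈ t.1 := by
        simpa [et] using t.1.orderEmbOfFin_mem _ a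
      have h2 : Ψ ⟨t, π⟩ (et t (Sum.inl a)) ∈ s := by
        rw [hΨapp]
        simpa [hEdef] using s.orderEmbOfFin_mem hs (π.1 a)
      simp [h1, h2]
    · rw [hx, hz]
      have h1 : et t (Sum.inr b) ∉ t.1 := by
        have : et t (Sum.inr b) ∈ t.1ᶜ := by
          simpa [et] using (t.1ᶜ).orderEmbOfFin_mem (tcompl_card him t.2) b
        exact Finset.mem_compl.mp this
      have h2 : Ψ ⟨t, π⟩ (et t (Sum.inr b)) ∉ s := by
        rw [hΨapp]
        have : E (Equiv.sumCongr π.1 π.2 (Sum.inr b)) ∈ sᶜ := by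
          simpa [hEdef] using sᶜ.orderEmbOfFin_mem hs' (π.2 b)
        exact Finset.mem_compl.mp this
      simp [h1, h2]
  have step1 : C.det = ∑ p ∈ S, ((Equiv.Perm.sign (Ψ p) : ℤ) : R) * ∏ x, C (Ψ p x) x := by
    rw [Matrix.det_apply']
    refine (Finset.sum_bij (fun p _ => Ψ p) (fun _ _ => mem_univ _) ?_ ?_ (fun _ _ => rfl)).symm
    · -- injectivity
      rintro ⟨t1, π1⟩ _ ⟨t2, π2⟩ _ h
      replace h : Ψ ⟨t1, π1⟩ = Ψ ⟨t2, π2⟩ := h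
      have ht : t1 = t2 := by
        apply Subtype.ext
        apply Finset.ext
        intro x
        rw [← hmem t1 π1 x, ← hmem t2 π2 x, h]
      subst ht
      have hππ : Equiv.sumCongr π1.1 π1.2 = Equiv.sumCongr π2.1 π2.2 := by
        apply Equiv.ext
        intro z
        apply E.injective
        rw [← hΨapp t1 π1 z, ← hΨapp t1 π2 z, h]
      have : π1 = π2 := Equiv.Perm.sumCongrHom_injective hππ
      rw [this]
    · -- surjectivity
      intro σ _
      set t0 := (univ : Finset (Fin k)).filter (fun x => σ x ∈ s) with ht0
      have ht0card : #t0 = i := by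
        have himg : t0 = s.image ⇑σ.symm := by
          ext x
          simp only [ht0, mem_filter, mem_univ, true_and, Finset.mem_image]
          constructor
          · intro hx
            exact ⟨σ x, hx, σ.symm_apply_apply x⟩
          · rintro ⟨y, hy, rfl⟩
            rwa [σ.apply_symm_apply]
        rw [himg, Finset.card_image_of_injective _ σ.symm.injective, hs]
      have ht0mem : t0 ∈ (univ : Finset (Fin k)).powersetCard i :=
        Finset.mem_powersetCard_univ.mpr ht0card
      set t : {x // x ∈ (univ : Finset (Fin k)).powersetCard i} := ⟨t0, ht0mem⟩ with htdef
      set τ : (Fin i ⊕ Fin m) ≃ (Fin i ⊕ Fin m) := (et t).trans (σ.trans E.symm) with hτ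
      have hmapsto : Set.MapsTo ⇑τ (Set.range Sum.inl) (Set.range Sum.inl) := by
        rintro z ⟨a, rfl⟩
        have h1 : σ (et t (Sum.inl a)) ∈ s := by
          have hmem1 : et t (Sum.inl a) ∈ t0 := by
            simp only [et, finSumEquivOfFinset_inl]
            exact t0.orderEmbOfFin_mem ((Finset.mem_powersetCard.mp t.2).2) a
          simpa [ht0] using (Finset.mem_filter.mp hmem1).2
        rcases hz : E.symm (σ (et t (Sum.inl a))) with a' | b'
        · exact ⟨a', by simp [hτ, hz]⟩
        · exfalso
          have heq : σ (et t (Sum.inl a)) = E (Sum.inr b') := by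
            rw [← hz, E.apply_symm_apply]
          rw [heq] at h1
          have : E (Sum.inr b') ∈ sᶜ := by
            simpa [hEdef] using sᶜ.orderEmbOfFin_mem hs' b'
          exact (Finset.mem_compl.mp this) h1
      obtain ⟨π, hπ⟩ := Equiv.Perm.mem_sumCongrHom_range_of_perm_mapsTo_inl hmapsto
      refine ⟨⟨t, π⟩, Finset.mem_sigma.mpr ⟨Finset.mem_attach _ _, mem_univ _⟩, ?_⟩
      have hπ' : Equiv.sumCongr π.1 π.2 = τ := hπ
      apply Equiv.ext
      intro x
      have h1 : Ψ ⟨t, π⟩ x = E (Equiv.sumCongr π.1 π.2 ((et t).symm x)) := rfl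
      rw [h1, hπ']
      simp [hτ]
  rw [step1, hS, Finset.sum_sigma]
  refine Finset.sum_congr rfl ?_
  intro t _
  have ht1 : #t.1 = i := (Finset.mem_powersetCard.mp t.2).2
  have ht2 : #(t.1ᶜ) = m := tcompl_card him t.2
  set A' := A.submatrix (⇑(s.orderEmbOfFin hs)) (⇑(t.1.orderEmbOfFin ht1)) with hA'
  set B' := B.submatrix (⇑(sᶜ.orderEmbOfFin hs')) (⇑((t.1ᶜ).orderEmbOfFin ht2)) with hB'
  have hsignR : ∀ π : Perm (Fin i) × Perm (Fin m),
      ((Equiv.Perm.sign (Ψ ⟨t, π⟩) : ℤ) : R)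
        = (-1 : R) ^ (∑ j ∈ s, (j : ℕ)) * (-1 : R) ^ (∑ j ∈ t.1, (j : ℕ)) *
            (((Equiv.Perm.sign π.1 : ℤ) : R) * ((Equiv.Perm.sign π.2 : ℤ) : R)) := by
    intro π
    have hdecomp : Ψ ⟨t, π⟩ =
        ((std.symm.trans E) * ((std.symm.trans (Equiv.sumCongr π.1 π.2)).trans std))
          * (std.symm.trans (et t))⁻¹ := by
      apply Equiv.ext
      intro x
      simp [Ψ, Equiv.Perm.mul_apply, Equiv.Perm.inv_def, Equiv.symm_trans_apply]
    have hc : Equiv.Perm.sign ((std.symm.trans (Equiv.sumCongr π.1 π.2)).trans std)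
        = Equiv.Perm.sign π.1 * Equiv.Perm.sign π.2 := by
      rw [← Equiv.Perm.sign_sumCongr]
      exact (Equiv.Perm.sign_eq_sign_of_equiv _ _ std (fun z => by simp)).symm
    have hsq : (-1 : R) ^ (∑ a : Fin i, (a : ℕ)) * (-1 : R) ^ (∑ a : Fin i, (a : ℕ)) = 1 := by
      rw [← pow_add, ← two_mul, pow_mul]
      norm_num
    rw [hdecomp, Equiv.Perm.sign_mul, Equiv.Perm.sign_mul, Equiv.Perm.sign_inv, hc,
      sign_rho him s hs hs', sign_rho him t.1 ht1 ht2]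
    push_cast
    linear_combination (((Equiv.Perm.sign π.1 : ℤ) : R) * ((Equiv.Perm.sign π.2 : ℤ) : R)
      * (-1 : R) ^ (∑ j ∈ s, (j : ℕ)) * (-1 : R) ^ (∑ j ∈ t.1, (j : ℕ))) * hsq
  have hprod : ∀ π : Perm (Fin i) × Perm (Fin m),
      (∏ x, C (Ψ ⟨t, π⟩ x) x)
        = (∏ a, A' (π.1 a) a) * ∏ b, B' (π.2 b) b := by
    intro π
    rw [← Equiv.prod_comp (et t) (fun x => C (Ψ ⟨t, π⟩ x) x), Fintype.prod_sum_type]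
    congr 1
    · refine Finset.prod_congr rfl ?_
      intro a _
      have h1 : Ψ ⟨t, π⟩ (et t (Sum.inl a)) = s.orderEmbOfFin hs (π.1 a) := by
        rw [hΨapp]
        simp [hEdef]
      have h2 : et t (Sum.inl a) = t.1.orderEmbOfFin ht1 a := by
        simp [et]
      rw [h1, h2, hC]
      exact congrFun (Finset.piecewise_eq_of_mem _ _ _ (s.orderEmbOfFin_mem hs (π.1 a))) _
    · refine Finset.prod_congr rfl ?_
      intro b _
      have h1 : Ψ ⟨t, π⟩ (et t (Sum.inr b)) = sᶜ.orderEmbOfFin hs' (π.2 b) := by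
        rw [hΨapp]
        simp [hEdef]
      have h2 : et t (Sum.inr b) = (t.1ᶜ).orderEmbOfFin ht2 b := by
        simp [et]
      have h3 : sᶜ.orderEmbOfFin hs' (π.2 b) ∉ s :=
        Finset.mem_compl.mp (sᶜ.orderEmbOfFin_mem hs' (π.2 b))
      rw [h1, h2, hC]
      exact congrFun (Finset.piecewise_eq_of_notMem _ _ _ h3) _
  calc ∑ π : Perm (Fin i) × Perm (Fin m),
        ((Equiv.Perm.sign (Ψ ⟨t, π⟩) : ℤ) : R) * ∏ x, C (Ψ ⟨t, π⟩ x) x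
      = ∑ π : Perm (Fin i) × Perm (Fin m),
          ((-1 : R) ^ (∑ j ∈ s, (j : ℕ)) * (-1 : R) ^ (∑ j ∈ t.1, (j : ℕ))) *
          ((((Equiv.Perm.sign π.1 : ℤ) : R) * ∏ a, A' (π.1 a) a) *
           (((Equiv.Perm.sign π.2 : ℤ) : R) * ∏ b, B' (π.2 b) b)) := by
        refine Finset.sum_congr rfl ?_
        intro π _
        rw [hsignR, hprod]
        ring
    _ = ((-1 : R) ^ (∑ j ∈ s, (j : ℕ)) * (-1 : R) ^ (∑ j ∈ t.1, (j : ℕ))) *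
          ∑ π : Perm (Fin i) × Perm (Fin m),
          ((((Equiv.Perm.sign π.1 : ℤ) : R) * ∏ a, A' (π.1 a) a) *
           (((Equiv.Perm.sign π.2 : ℤ) : R) * ∏ b, B' (π.2 b) b)) := by
        rw [← Finset.mul_sum]
    _ = ((-1 : R) ^ (∑ j ∈ s, (j : ℕ)) * (-1 : R) ^ (∑ j ∈ t.1, (j : ℕ))) *
          ((∑ π1 : Perm (Fin i), ((Equiv.Perm.sign π1 : ℤ) : R) * ∏ a, A' (π1 a) a) *
           (∑ π2 : Perm (Fin m), ((Equiv.Perm.sign π2 : ℤ) : R) * ∏ b, B' (π2 b) b)) := by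
        rw [Fintype.sum_prod_type, Fintype.sum_mul_sum]
    _ = (-1 : R) ^ (∑ j ∈ s, (j : ℕ)) * (-1 : R) ^ (∑ j ∈ t.1, (j : ℕ)) * A'.det * B'.det := by
        rw [← Matrix.det_apply', ← Matrix.det_apply']
        ring

end DetAddAux

/-- Expansion of the determinant of a sum of two k×k matrices as a signed sum, over all
pairs of equal-size increasing subsequences `s`, `t` of rows/columns, of
`det (A_s^t) * det (B_{s'}^{t'})` where primes denote complementary subsequences. -/
theorem stmt_2 {R : Type*} [CommRing R] (k : ℕ) (A B : Matrix (Fin k) (Fin k) R) :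
    (A + B).det =
      ∑ i ∈ Finset.range (k + 1),
        ∑ s ∈ ((Finset.univ : Finset (Fin k)).powersetCard i).attach,
          ∑ t ∈ ((Finset.univ : Finset (Fin k)).powersetCard i).attach,
            (-1 : R) ^ (∑ j ∈ s.1, (j : ℕ)) * (-1 : R) ^ (∑ j ∈ t.1, (j : ℕ)) *
              (A.submatrix
                (s.1.orderEmbOfFin ((Finset.mem_powersetCard.mp s.2).2))
                (t.1.orderEmbOfFin ((Finset.mem_powersetCard.mp t.2).2))).det *
              (B.submatrix
                ((s.1ᶜ).orderEmbOfFin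
                  (by rw [Finset.card_compl, (Finset.mem_powersetCard.mp s.2).2]))
                ((t.1ᶜ).orderEmbOfFin
                  (by rw [Finset.card_compl, (Finset.mem_powersetCard.mp t.2).2]))).det := by
  classical
  have h0 : (A + B).det = ∑ s : Finset (Fin k), Matrix.det (s.piecewise A B) :=
    (Matrix.detRowAlternating (n := Fin k) (R := R)).toMultilinearMap.map_add_univ A B
  rw [h0, ← Finset.powerset_univ, Finset.powerset_card_disjiUnion]
  refine (Finset.sum_disjiUnion _ _ _).trans ?_
  simp only [Finset.card_univ, Fintype.card_fin]
  refine Finset.sum_congr rfl ?_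
  intro i hi
  have him : i + (Fintype.card (Fin k) - i) = k := by
    have hik : i ≤ k := Nat.lt_succ_iff.mp (Finset.mem_range.mp hi)
    rw [Fintype.card_fin]; omega
  rw [← Finset.sum_attach ((Finset.univ : Finset (Fin k)).powersetCard i)
    (fun u => Matrix.det (u.piecewise A B))]
  refine Finset.sum_congr rfl ?_
  intro s _
  exact core him A B s.1 ((Finset.mem_powersetCard.mp s.2).2)
    (by rw [Finset.card_compl, (Finset.mem_powersetCard.mp s.2).2])
end

section
/- For a partition λ with at most k parts in variables z₁,...,z_k, the Schur polynomial defined as the ratio π_λ = det(z_i^{λ_j+k−j}) / ∏_{i<j}(z_i − z_j) equals the Jacobi–Trudi determinant det(h_{λ_i + j − i})_{1≤i,j≤ℓ(λ)}, where h_m denotes the m-th complete homogeneous symmetric polynomial in z₁,...,z_k. -/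
open Finset

/-- The m-th complete homogeneous symmetric polynomial `h_m` in variables `z₁,...,z_k`
(`h₀ = 1`, `h_m = 0` for `m < 0`). -/
noncomputable def hPoly (k : ℕ) : ℤ → MvPolynomial (Fin k) ℚ :=
  fun n => if 0 ≤ n then
    ∑ d ∈ Finset.filter (fun d : Fin k → Fin (n.toNat + 1) => ∑ i, (d i : ℕ) = n.toNat)
        Finset.univ, ∏ i, MvPolynomial.X i ^ (d i : ℕ)
  else 0

namespace JacobiTrudiAux

open PowerSeries Matrix

lemma hPoly_neg {k : ℕ} {n : ℤ} (h : n < 0) : hPoly k n = 0 := by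
  simp [hPoly, not_le.mpr h]

lemma hPoly_zero (k : ℕ) : hPoly k 0 = 1 := by
  rw [hPoly, if_pos le_rfl]
  rw [show (Finset.filter (fun d : Fin k → Fin ((0:ℤ).toNat + 1) => ∑ i, (d i : ℕ) = (0:ℤ).toNat)
        Finset.univ) = {fun _ => 0} from ?_]
  · simp
  · ext d
    simp only [mem_filter, mem_univ, true_and, mem_singleton]
    constructor
    · intro _
      funext i
      exact Fin.ext (by have := (d i).isLt; omega)
    · intro h; subst h; simp

noncomputable def geomS {R : Type*} [CommRing R] (z : R) : R⟦X⟧ := PowerSeries.mk fun n => z ^ n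

lemma one_sub_mul_geomS {R : Type*} [CommRing R] (z : R) :
    ((1 : R⟦X⟧) - PowerSeries.C z * PowerSeries.X) * geomS z = 1 := by
  ext n
  rw [sub_mul, one_mul, map_sub]
  cases n with
  | zero => simp [geomS, mul_comm (PowerSeries.C z) PowerSeries.X]
  | succ n =>
    rw [mul_assoc, mul_comm PowerSeries.X (geomS z), ← mul_assoc] at *
    simp [geomS, PowerSeries.coeff_succ_mul_X, pow_succ, mul_comm]

lemma coeff_prod_one_sub_eq_zero {R : Type*} [CommRing R] {ι : Type*} [DecidableEq ι]
    (s : Finset ι) (z : ι → R) {p : ℕ} (hp : s.card < p) :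
    PowerSeries.coeff p (∏ l ∈ s, (1 - PowerSeries.C (z l) * PowerSeries.X)) = 0 := by
  induction s using Finset.induction_on generalizing p with
  | empty =>
    simp only [prod_empty]
    rw [PowerSeries.coeff_one, if_neg (by omega)]
  | insert a s' hx ih =>
    rw [Finset.prod_insert hx, sub_mul, one_mul, map_sub, mul_assoc,
      PowerSeries.coeff_C_mul]
    simp only [card_insert_of_notMem hx] at hp
    obtain ⟨q, rfl⟩ : ∃ q, p = q + 1 := ⟨p - 1, by omega⟩
    rw [PowerSeries.coeff_succ_X_mul, ih (by omega), ih (by omega), mul_zero, sub_zero]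

noncomputable def Efun (k : ℕ) (i : Fin k) : (MvPolynomial (Fin k) ℚ)⟦X⟧ :=
  ∏ l ∈ univ.erase i, (1 - PowerSeries.C (MvPolynomial.X l) * PowerSeries.X)

noncomputable def Hfull (k : ℕ) : (MvPolynomial (Fin k) ℚ)⟦X⟧ :=
  ∏ l : Fin k, geomS (MvPolynomial.X l)

lemma Efun_mul_Hfull (k : ℕ) (i : Fin k) :
    Efun k i * Hfull k = geomS (MvPolynomial.X i) := by
  rw [Hfull, ← Finset.mul_prod_erase univ _ (mem_univ i), Efun,
    mul_comm (geomS (MvPolynomial.X i)), ← mul_assoc, ← Finset.prod_mul_distrib]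
  rw [Finset.prod_congr rfl (fun l _ => one_sub_mul_geomS (MvPolynomial.X l)),
    Finset.prod_const_one, one_mul]

lemma coeff_Hfull (k m : ℕ) :
    PowerSeries.coeff m (Hfull k) = hPoly k m := by
  rw [Hfull, PowerSeries.coeff_prod]
  rw [hPoly, if_pos (by positivity)]
  have hm : ((m : ℤ)).toNat = m := by simp
  simp only [hm, geomS, coeff_mk]
  refine Finset.sum_bij' (i := fun f hf => fun i => (⟨f i, ?_⟩ : Fin (m+1)))
    (j := fun d hd => Finsupp.equivFunOnFinite.symm fun i => ((d i : ℕ)))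
    ?_ ?_ ?_ ?_ ?_
  · rw [Finset.mem_finsuppAntidiag] at hf
    have h1 : f i ≤ ∑ x : Fin k, f x := Finset.single_le_sum (fun _ _ => Nat.zero_le _) (mem_univ i)
    have h2 : ∑ x : Fin k, f x = m := by simpa using hf.1
    omega
  · intro f hf
    rw [Finset.mem_finsuppAntidiag] at hf
    simp only [mem_filter, mem_univ, true_and]
    simpa using hf.1
  · intro d hd
    simp only [mem_filter, mem_univ, true_and] at hd
    rw [Finset.mem_finsuppAntidiag]
    refine ⟨by simpa using hd, fun x _ => mem_univ x⟩
  · intro f hf; ext i; simp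
  · intro d hd; funext i; exact Fin.ext (by simp)
  · intro f hf; exact Finset.prod_congr rfl fun i _ => rfl

lemma keyCoeff (k : ℕ) (i : Fin k) (m : ℕ) :
    (MvPolynomial.X i : MvPolynomial (Fin k) ℚ) ^ m =
      ∑ r ∈ range k, PowerSeries.coeff r (Efun k i) * hPoly k ((m : ℤ) - r) := by
  have h0 : (MvPolynomial.X i : MvPolynomial (Fin k) ℚ) ^ m
      = PowerSeries.coeff m (Efun k i * Hfull k) := by
    rw [Efun_mul_Hfull]; simp [geomS]
  rw [h0, PowerSeries.coeff_mul, Finset.Nat.sum_antidiagonal_eq_sum_range_succ_mk]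
  have hterm : ∀ p ∈ range (m+1),
      PowerSeries.coeff p (Efun k i) * PowerSeries.coeff (m - p) (Hfull k)
      = PowerSeries.coeff p (Efun k i) * hPoly k ((m:ℤ) - p) := by
    intro p hp
    rw [mem_range] at hp
    rw [coeff_Hfull]
    congr 2
    omega
  rw [Finset.sum_congr rfl hterm]
  rw [Finset.sum_subset (Finset.range_subset_range.2 (by omega : m + 1 ≤ m + 1 + k))
      (fun x hx hx' => ?_),
    ← Finset.sum_subset (Finset.range_subset_range.2 (by omega : k ≤ m + 1 + k))
      (fun x hx hx' => ?_)]
  · simp only [mem_range, not_lt] at hx hx'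
    rw [Efun, coeff_prod_one_sub_eq_zero _ _ ?_, zero_mul]
    rw [Finset.card_erase_of_mem (mem_univ i), Finset.card_univ, Fintype.card_fin]
    have : 1 ≤ k := i.pos
    omega
  · simp only [mem_range, not_lt] at hx hx'
    rw [hPoly_neg (by omega), mul_zero]

lemma det_pow_rev {R : Type*} [CommRing R] (k : ℕ) (v : Fin k → R) :
    Matrix.det (Matrix.of fun i j : Fin k => v i ^ (k - 1 - (j:ℕ))) =
      ∏ i : Fin k, ∏ j ∈ Finset.Ioi i, (v i - v j) := by
  rw [← Matrix.det_submatrix_equiv_self Fin.revPerm]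
  have h1 : (Matrix.of fun i j : Fin k => v i ^ (k - 1 - (j:ℕ))).submatrix
      Fin.revPerm Fin.revPerm = Matrix.vandermonde (v ∘ Fin.rev) := by
    ext i j
    simp only [Matrix.submatrix_apply, Matrix.of_apply, Matrix.vandermonde_apply,
      Fin.revPerm_apply, Function.comp_apply]
    congr 1
    have := j.isLt
    rw [Fin.val_rev]
    omega
  rw [h1, Matrix.det_vandermonde]
  rw [Finset.prod_sigma', Finset.prod_sigma']
  refine Finset.prod_nbij' (fun p => ⟨p.2.rev, p.1.rev⟩) (fun p => ⟨p.2.rev, p.1.rev⟩)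
    ?_ ?_ ?_ ?_ ?_
  · rintro ⟨a, b⟩ hab
    simp only [mem_sigma, mem_univ, Finset.mem_Ioi, true_and] at hab ⊢
    exact Fin.rev_lt_rev.mpr hab
  · rintro ⟨a, b⟩ hab
    simp only [mem_sigma, mem_univ, Finset.mem_Ioi, true_and] at hab ⊢
    exact Fin.rev_lt_rev.mpr hab
  · rintro ⟨a, b⟩ _; simp [Fin.rev_rev]
  · rintro ⟨a, b⟩ _; simp [Fin.rev_rev]
  · rintro ⟨a, b⟩ _; simp [Fin.rev_rev]


noncomputable def Bmat (k : ℕ) : Matrix (Fin k) (Fin k) (MvPolynomial (Fin k) ℚ) :=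
  Matrix.of fun r i => PowerSeries.coeff (k - 1 - (r:ℕ)) (Efun k i)

noncomputable def Hmat (k : ℕ) (mu : Fin k → ℕ) :
    Matrix (Fin k) (Fin k) (MvPolynomial (Fin k) ℚ) :=
  Matrix.of fun j r => hPoly k ((mu j : ℤ) + r - j)

lemma matrix_entry (k : ℕ) (mu : Fin k → ℕ) (i j : Fin k) :
    (MvPolynomial.X i : MvPolynomial (Fin k) ℚ) ^ (mu j + (k - 1 - (j:ℕ))) =
      ∑ r : Fin k, hPoly k ((mu j : ℤ) + r - j)
         * PowerSeries.coeff (k - 1 - (r:ℕ)) (Efun k i) := by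
  have hj := j.isLt
  rw [keyCoeff k i (mu j + (k - 1 - (j:ℕ))), ← Finset.sum_range_reflect,
    ← Fin.sum_univ_eq_sum_range]
  refine Finset.sum_congr rfl fun r _ => ?_
  have hr := r.isLt
  rw [mul_comm]
  congr 1
  congr 1
  omega

lemma det_X_pow (k : ℕ) (mu : Fin k → ℕ) :
    Matrix.det (fun i j : Fin k =>
        (MvPolynomial.X i : MvPolynomial (Fin k) ℚ) ^ (mu j + (k - 1 - (j:ℕ)))) =
      (Hmat k mu).det * (Bmat k).det := by
  have h : (fun i j : Fin k =>
      (MvPolynomial.X i : MvPolynomial (Fin k) ℚ) ^ (mu j + (k - 1 - (j:ℕ))))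
      = (Hmat k mu * Bmat k)ᵀ := by
    funext i j
    rw [Matrix.transpose_apply, Matrix.mul_apply]
    exact matrix_entry k mu i j
  rw [h, Matrix.det_transpose, Matrix.det_mul]

lemma det_Hmat_zero (k : ℕ) : (Hmat k (fun _ => 0)).det = 1 := by
  rw [Matrix.det_of_upperTriangular (M := Hmat k (fun _ => 0)) ?ht]
  case ht =>
    intro a b hab
    refine hPoly_neg ?_
    simp only [id] at hab
    have : (b:ℕ) < (a:ℕ) := hab
    push_cast
    omega
  refine Finset.prod_eq_one fun a _ => ?_
  show hPoly k ((0:ℕ) + a - a) = 1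
  rw [show ((0:ℕ) : ℤ) + a - a = 0 by ring, hPoly_zero]

lemma det_Bmat (k : ℕ) : (Bmat k).det =
    ∏ i : Fin k, ∏ j ∈ Finset.Ioi i, (MvPolynomial.X i - MvPolynomial.X j :
      MvPolynomial (Fin k) ℚ) := by
  have h := det_X_pow k (fun _ => 0)
  simp only [Nat.zero_add, det_Hmat_zero, one_mul] at h
  rw [← h, ← det_pow_rev k (fun i => (MvPolynomial.X i : MvPolynomial (Fin k) ℚ))]
  rfl

lemma det_Hmat (k L : ℕ) (hLk : L ≤ k) (lam : Fin k → ℕ)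
    (hL : ∀ j : Fin k, L ≤ (j : ℕ) → lam j = 0) :
    (Hmat k lam).det = Matrix.det (fun a b : Fin L =>
      hPoly k ((lam (Fin.castLE hLk a) : ℤ) + (b : ℤ) - (a : ℤ))) := by
  have hk : L + (k - L) = k := by omega
  set e : Fin L ⊕ Fin (k-L) ≃ Fin k := finSumFinEquiv.trans (finCongr hk) with he
  have hvl : ∀ b : Fin L, ((e (Sum.inl b)) : ℕ) = (b : ℕ) := by
    intro b; simp [he, finSumFinEquiv_apply_left]
  have hvr : ∀ a : Fin (k-L), ((e (Sum.inr a)) : ℕ) = L + (a : ℕ) := by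
    intro a; simp [he, finSumFinEquiv_apply_right]
  rw [← Matrix.det_submatrix_equiv_self e, ← Matrix.fromBlocks_toBlocks
    ((Hmat k lam).submatrix e e)]
  have hC : ((Hmat k lam).submatrix e e).toBlocks₂₁ = 0 := by
    refine Matrix.ext fun a b => ?_
    simp only [Matrix.toBlocks₂₁, Matrix.of_apply, Matrix.submatrix_apply, Matrix.zero_apply]
    rw [show Hmat k lam (e (Sum.inr a)) (e (Sum.inl b))
        = hPoly k ((lam (e (Sum.inr a)) : ℤ) + ((e (Sum.inl b)):ℕ) - ((e (Sum.inr a)):ℕ))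
        from rfl]
    rw [hL _ (by rw [hvr]; omega)]
    refine hPoly_neg ?_
    rw [hvl, hvr]
    have := b.isLt
    push_cast
    omega
  rw [hC, Matrix.det_fromBlocks_zero₂₁]
  have hD : ((Hmat k lam).submatrix e e).toBlocks₂₂.det = 1 := by
    rw [Matrix.det_of_upperTriangular (M := ((Hmat k lam).submatrix e e).toBlocks₂₂) ?ht]
    case ht =>
      intro a b hab
      have hab' : (b:ℕ) < (a:ℕ) := hab
      simp only [Matrix.toBlocks₂₂, Matrix.of_apply, Matrix.submatrix_apply]
      rw [show Hmat k lam (e (Sum.inr a)) (e (Sum.inr b))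
          = hPoly k ((lam (e (Sum.inr a)) : ℤ) + ((e (Sum.inr b)):ℕ) - ((e (Sum.inr a)):ℕ))
          from rfl]
      rw [hL _ (by rw [hvr]; omega)]
      refine hPoly_neg ?_
      rw [hvr, hvr]
      push_cast
      omega
    refine Finset.prod_eq_one fun a _ => ?_
    simp only [Matrix.toBlocks₂₂, Matrix.of_apply, Matrix.submatrix_apply]
    rw [show Hmat k lam (e (Sum.inr a)) (e (Sum.inr a))
        = hPoly k ((lam (e (Sum.inr a)) : ℤ) + ((e (Sum.inr a)):ℕ) - ((e (Sum.inr a)):ℕ))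
        from rfl]
    rw [hL _ (by rw [hvr]; omega)]
    rw [show ((0:ℕ) : ℤ) + ((e (Sum.inr a)):ℕ) - ((e (Sum.inr a)):ℕ) = 0 by ring, hPoly_zero]
  rw [hD, mul_one]
  have h11 : ((Hmat k lam).submatrix ⇑e ⇑e).toBlocks₁₁
      = Matrix.of fun a b : Fin L =>
          hPoly k ((lam (Fin.castLE hLk a) : ℤ) + ((b:ℕ):ℤ) - ((a:ℕ):ℤ)) := by
    refine Matrix.ext fun a b => ?_
    show hPoly k ((lam (e (Sum.inl a)) : ℤ) + ((e (Sum.inl b)):ℕ) - ((e (Sum.inl a)):ℕ)) = _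
    have h1 : e (Sum.inl a) = Fin.castLE hLk a := Fin.ext (by rw [hvl]; rfl)
    rw [h1]
    congr 1
  rw [h11]
  rfl
end JacobiTrudiAux

/-- The bialternant Schur polynomial `det(z_i^{λ_j+k−j})/∏_{i<j}(z_i−z_j)` equals the
Jacobi–Trudi determinant `det(h_{λ_i+j−i})` of size `ℓ(λ)` (the number of nonzero
parts of `λ`); stated with the Vandermonde determinant multiplied across. -/
theorem stmt_10 (k : ℕ) (L : ℕ) (hLk : L ≤ k) (lam : Fin k → ℕ)
    (hanti : ∀ i j : Fin k, i ≤ j → lam j ≤ lam i)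
    (hL : ∀ j : Fin k, L ≤ (j : ℕ) → lam j = 0)
    (hLpos : ∀ j : Fin k, (j : ℕ) < L → 0 < lam j) :
    Matrix.det (fun i j : Fin k =>
        (MvPolynomial.X i : MvPolynomial (Fin k) ℚ) ^ (lam j + (k - 1 - (j : ℕ)))) =
      (∏ i : Fin k, ∏ j ∈ Finset.Ioi i, (MvPolynomial.X i - MvPolynomial.X j)) *
        Matrix.det (fun a b : Fin L =>
          hPoly k ((lam (Fin.castLE hLk a) : ℤ) + (b : ℤ) - (a : ℤ))) := by
  rw [JacobiTrudiAux.det_X_pow k lam, JacobiTrudiAux.det_Bmat k,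
    JacobiTrudiAux.det_Hmat k L hLk lam hL, mul_comm]
end

section
/- Let k ≥ l ≥ 1 and let B = R_{k,l} ⊗_{R_{k+l}} R_{k,l}, where R_{k,l} ⊂ ℂ[z₁,...,z_{k+l}] is the subring of polynomials invariant under S_k × S_l and R_{k+l} the subring of symmetric polynomials. The R_{k,l}-bimodule map Δ: R_{k,l} → B determined by Δ(1) = ∑_α (−1)^{|α|} π_α ⊗ π'_{\overline{α^*}}, summed over partitions α with l ≥ α₁ ≥ ... ≥ α_k ≥ 0, is a well-defined bimodule homomorphism, where π_α is the Schur polynomial in z₁,...,z_k and π'_β the Schur polynomial in z_{k+1},...,z_{k+l}, α* = (l−α_k,...,l−α₁), and overline denotes conjugate partition. -/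
open Finset

/-! Koszul presentation of the Soergel bimodule `B = R_{k,l} ⊗_{R_{k+l}} R_{k,l}`:
the polynomial ring `ℂ[x₁,...,x_k,y₁,...,y_l,x'₁,...,x'_k,y'₁,...,y'_l]` (in the
elementary-symmetric variables) modulo the ideal `I` generated by
`Σ_i^{x,y} − Σ_i^{x',y'}`, `i = 1,...,k+l`.  A bimodule map `Δ : R_{k,l} → B` with
`Δ(1) = ∑ p_i ⊗ q_i` corresponds to `f = ∑ p_i(x,y) q_i(x',y')`, and the bimodule-map
condition is `(y_j − y'_j)·f ∈ I` for `j = 1,...,l`. -/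

/-- Variables: `x`, `y` (left factor) and `x'`, `y'` (right factor). -/
abbrev BigVar (k l : ℕ) := (Fin k ⊕ Fin l) ⊕ (Fin k ⊕ Fin l)

abbrev Rbig (k l : ℕ) := MvPolynomial (BigVar k l) ℂ

/-- `x_j` for `1 ≤ j ≤ k`, with `x₀ = 1` and `x_j = 0` for `j > k`. -/
noncomputable def xv (k l : ℕ) (j : ℕ) : Rbig k l :=
  if h0 : j = 0 then 1 else if h : j ≤ k then MvPolynomial.X (.inl (.inl ⟨j - 1, by omega⟩)) else 0

noncomputable def yv (k l : ℕ) (j : ℕ) : Rbig k l :=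
  if h0 : j = 0 then 1 else if h : j ≤ l then MvPolynomial.X (.inl (.inr ⟨j - 1, by omega⟩)) else 0

noncomputable def xv' (k l : ℕ) (j : ℕ) : Rbig k l :=
  if h0 : j = 0 then 1 else if h : j ≤ k then MvPolynomial.X (.inr (.inl ⟨j - 1, by omega⟩)) else 0

noncomputable def yv' (k l : ℕ) (j : ℕ) : Rbig k l :=
  if h0 : j = 0 then 1 else if h : j ≤ l then MvPolynomial.X (.inr (.inr ⟨j - 1, by omega⟩)) else 0

/-- `Σ_i^{x,y} = ∑_{j=0}^{i} x_j y_{i−j}`. -/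
noncomputable def SigXY (k l : ℕ) (c d : ℕ → Rbig k l) (i : ℕ) : Rbig k l :=
  ∑ j ∈ Finset.range (i + 1), c j * d (i - j)

/-- The ideal `I` generated by `Σ_i^{x,y} − Σ_i^{x',y'}` for `i = 1,...,k+l`. -/
noncomputable def Ibig (k l : ℕ) : Ideal (Rbig k l) :=
  Ideal.span ((fun i => SigXY k l (xv k l) (yv k l) i - SigXY k l (xv' k l) (yv' k l) i) ''
    (Set.Icc 1 (k + l)))

/-- Elementary-symmetric variables with integer index (`0` outside range). -/
noncomputable def xe (k l : ℕ) : ℤ → Rbig k l :=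
  fun n => if 0 ≤ n then xv k l n.toNat else 0

noncomputable def ye' (k l : ℕ) : ℤ → Rbig k l :=
  fun n => if 0 ≤ n then yv' k l n.toNat else 0

/-- Conjugate partition: `(conj α)_j = #{i : α_i ≥ j}`. -/
def conjP {k : ℕ} (l : ℕ) (α : Fin k → ℕ) : Fin l → ℕ :=
  fun j => (Finset.filter (fun i : Fin k => (j : ℕ) + 1 ≤ α i) Finset.univ).card

/-- `f = ∑_α (−1)^{|α|} π_α(x) π'_{\overline{α^*}}(y')`, summed over partitions `α` with
`l ≥ α₁ ≥ ... ≥ α_k ≥ 0`; Schur polynomials are Giambelli determinants in the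
elementary-symmetric variables (`π_α = |x_{μ_a+b−a}|` with `μ` the conjugate of `α`,
and `π'_{\overline{α^*}} = |y'_{α^*_a+b−a}|`). -/
noncomputable def fBig (k l : ℕ) : Rbig k l :=
  ∑ α ∈ Finset.filter (fun α : Fin k → Fin (l + 1) => ∀ i j : Fin k, i ≤ j → α j ≤ α i)
      Finset.univ,
    (-1 : Rbig k l) ^ (∑ i, (α i : ℕ)) *
      Matrix.det (fun a b : Fin l =>
        xe k l ((conjP l (fun i => (α i : ℕ)) a : ℤ) + (b : ℤ) - (a : ℤ))) *
      Matrix.det (fun a b : Fin k =>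
        ye' k l (((l - (α a.rev : ℕ) : ℕ) : ℤ) + (b : ℤ) - (a : ℤ)))


set_option maxHeartbeats 1000000

namespace Aux13
open Equiv Matrix

variable {k l : ℕ}


/-- strict mono gap lemma -/
lemma gap {a b : ℕ} {f : Fin a → Fin b} (hf : StrictMono f) :
    ∀ (d : ℕ) (i j : Fin a), (j : ℕ) = i + d → (f i : ℕ) + d ≤ f j := by
  intro d
  induction d with
  | zero => intro i j h; have : i = j := Fin.ext (by omega); simp [this]
  | succ d ih =>
    intro i j h
    have hj' : (i : ℕ) + d < a := by have := j.isLt; omega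
    have h1 := ih i ⟨i + d, hj'⟩ rfl
    have h2 : f ⟨i + d, hj'⟩ < f j := hf (by simp [Fin.lt_def]; omega)
    have := Fin.lt_def.mp h2
    omega

lemma le_of_strictMono {a b : ℕ} {f : Fin a → Fin b} (hf : StrictMono f) (i : Fin a) :
    (i : ℕ) ≤ f i := by
  rcases Nat.eq_zero_or_pos a with h | h
  · exact absurd i.isLt (by omega)
  · have h0 : (0 : ℕ) < a := h
    have := gap hf i ⟨0, h0⟩ i (by simp)
    omega

lemma apply_le_of_strictMono {a b : ℕ} {f : Fin a → Fin b} (hf : StrictMono f) (i : Fin a) :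
    (f i : ℕ) ≤ (b - a) + i := by
  rcases Nat.eq_zero_or_pos a with h | h
  · exact absurd i.isLt (by omega)
  · have ha : a - 1 < a := by omega
    have := gap hf (a - 1 - i) i ⟨a - 1, ha⟩ (by simp; omega)
    have := (f ⟨a - 1, ha⟩).isLt
    have hba : a ≤ b := by
      by_contra hc
      -- f injective from Fin a to Fin b forces a ≤ b
      exact hc (Fintype.card_fin b ▸ Fintype.card_fin a ▸
        Fintype.card_le_of_injective f hf.injective)
    omega

lemma conjP_le (α : Fin k → ℕ) (j : Fin l) : conjP l α j ≤ k := by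
  simpa [conjP] using (Finset.card_filter_le _ _).trans (by simp)

lemma conjP_antitone (α : Fin k → ℕ) {i j : Fin l} (h : i ≤ j) :
    conjP l α j ≤ conjP l α i := by
  apply Finset.card_le_card
  intro x hx
  simp only [Finset.mem_filter, Finset.mem_univ, true_and] at hx ⊢
  have : (i : ℕ) ≤ j := h
  omega

/-- decreasing predicate -/
def Dec (α : Fin k → Fin (l + 1)) : Prop := ∀ i j : Fin k, i ≤ j → α j ≤ α i

/-- key conjugacy lemma: for decreasing α, μ_j ≥ i+1 ↔ α_i ≥ j+1 -/
lemma conj_iff {α : Fin k → Fin (l + 1)} (hα : Dec α) (i : Fin k) (j : Fin l) :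
    (i : ℕ) + 1 ≤ conjP l (fun i => (α i : ℕ)) j ↔ (j : ℕ) + 1 ≤ α i := by
  constructor
  · intro h
    by_contra hc
    push_neg at hc
    have hsub : (Finset.filter (fun i' : Fin k => (j : ℕ) + 1 ≤ (α i' : ℕ)) Finset.univ)
        ⊆ Finset.Iio i := by
      intro x hx
      simp only [Finset.mem_filter, Finset.mem_univ, true_and] at hx
      simp only [Finset.mem_Iio]
      by_contra hxi
      push_neg at hxi
      have := hα i x hxi
      omega
    have := (Finset.card_le_card hsub).trans_eq (Fin.card_Iio i)
    simp only [conjP] at h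
    omega
  · intro h
    have hsub : Finset.Iic i ⊆
        (Finset.filter (fun i' : Fin k => (j : ℕ) + 1 ≤ (α i' : ℕ)) Finset.univ) := by
      intro x hx
      simp only [Finset.mem_Iic] at hx
      simp only [Finset.mem_filter, Finset.mem_univ, true_and]
      have := hα x i hx
      omega
    have := (Fin.card_Iic i ▸ Finset.card_le_card hsub)
    simp only [conjP]
    omega

/-- row enumeration for the first (x) block: `t_c = μ_{l-1-c} + c` -/
def tfun (α : Fin k → Fin (l + 1)) : Fin l → Fin (l + k) :=
  fun c => ⟨conjP l (fun i => (α i : ℕ)) c.rev + c, by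
    have := conjP_le (fun i => ((α i : ℕ))) c.rev
    have := c.isLt
    omega⟩

/-- row enumeration for the second (y') block: `s_c = l + c − α_c` -/
def sfun (α : Fin k → Fin (l + 1)) : Fin k → Fin (l + k) :=
  fun c => ⟨l + c - α c, by have := c.isLt; omega⟩

def efun (α : Fin k → Fin (l + 1)) : Fin l ⊕ Fin k → Fin (l + k) :=
  Sum.elim (tfun α) (sfun α)

lemma tfun_strictMono (α : Fin k → Fin (l + 1)) : StrictMono (tfun α) := by
  intro c c' h
  have hrev : c'.rev ≤ c.rev := by
    simp [Fin.le_def, Fin.rev]; have := Fin.lt_def.mp h; omega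
  have := conjP_antitone (fun i => ((α i : ℕ))) hrev
  simp only [tfun, Fin.lt_def]
  have := Fin.lt_def.mp h
  omega

lemma sfun_strictMono {α : Fin k → Fin (l + 1)} (hα : Dec α) : StrictMono (sfun α) := by
  intro c c' h
  have hle := hα c c' h.le
  have h1 := (α c).isLt
  simp only [sfun, Fin.lt_def]
  have := Fin.lt_def.mp h
  have : (α c' : ℕ) ≤ α c := hle
  omega

lemma efun_injective {α : Fin k → Fin (l + 1)} (hα : Dec α) : Function.Injective (efun α) := by
  have hdisj : ∀ (c : Fin l) (c' : Fin k), tfun α c ≠ sfun α c' := by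
    intro c c' he
    have he' : conjP l (fun i => (α i : ℕ)) c.rev + (c : ℕ) = l + c' - α c' := by
      simpa [tfun, sfun, Fin.ext_iff] using he
    set j := c.rev with hj
    set i := c' with hi
    have hjv : (c : ℕ) = l - 1 - j := by simp [hj, Fin.rev]; omega
    have hαl := (α i).isLt
    have hjl := j.isLt
    rcases le_or_gt ((j : ℕ) + 1) (α i) with hcase | hcase
    · have h1 := (conj_iff hα i j).mpr hcase
      omega
    · have h2 : ¬ ((i : ℕ) + 1 ≤ conjP l (fun i => (α i : ℕ)) j) := by
        intro hc; have := (conj_iff hα i j).mp hc; omega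
      push_neg at h2
      omega
  intro p q hpq
  cases p with
  | inl a => cases q with
    | inl a' => simpa using (tfun_strictMono α).injective (by simpa [efun] using hpq)
    | inr b => exact absurd hpq (hdisj a b)
  | inr b => cases q with
    | inl a' => exact absurd hpq.symm (hdisj a' b)
    | inr b' => simpa using (sfun_strictMono hα).injective (by simpa [efun] using hpq)

lemma efun_bijective {α : Fin k → Fin (l + 1)} (hα : Dec α) : Function.Bijective (efun α) :=
  (Fintype.bijective_iff_injective_and_card _).mpr ⟨efun_injective hα, by simp⟩

/-- the permutation `ρ_α ∘ block(σ₁,σ₂)` of `Fin (l+k)` -/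
noncomputable def permOf (α : Fin k → Fin (l + 1)) (σ₁ : Perm (Fin l)) (σ₂ : Perm (Fin k)) :
    Perm (Fin (l + k)) :=
  if h : Function.Bijective (efun α) then
    (finSumFinEquiv.symm.trans ((Equiv.sumCongr σ₁ σ₂).trans (Equiv.ofBijective _ h)))
  else 1

noncomputable def eps (α : Fin k → Fin (l + 1)) : ℤˣ := Equiv.Perm.sign (permOf α 1 1)

lemma permOf_apply {α : Fin k → Fin (l + 1)} (h : Function.Bijective (efun α))
    (σ₁ : Perm (Fin l)) (σ₂ : Perm (Fin k)) (p : Fin l ⊕ Fin k) :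
    permOf α σ₁ σ₂ (finSumFinEquiv p) = efun α (Equiv.sumCongr σ₁ σ₂ p) := by
  rw [permOf, dif_pos h]
  simp

lemma permOf_decomp {α : Fin k → Fin (l + 1)} (h : Function.Bijective (efun α))
    (σ₁ : Perm (Fin l)) (σ₂ : Perm (Fin k)) :
    permOf α σ₁ σ₂ =
      (finSumFinEquiv.permCongr (Equiv.sumCongr σ₁ σ₂)).trans (permOf α 1 1) := by
  ext z
  rw [permOf, permOf, dif_pos h, dif_pos h]
  simp [Equiv.permCongr_apply]

lemma sign_permOf {α : Fin k → Fin (l + 1)} (h : Function.Bijective (efun α))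
    (σ₁ : Perm (Fin l)) (σ₂ : Perm (Fin k)) :
    Equiv.Perm.sign (permOf α σ₁ σ₂) = eps α * Equiv.Perm.sign σ₁ * Equiv.Perm.sign σ₂ := by
  rw [permOf_decomp h, eps]
  rw [Equiv.Perm.sign_trans]
  rw [Equiv.Perm.sign_permCongr, Equiv.Perm.sign_sumCongr]
  rw [mul_assoc]



lemma eps_eq {α : Fin k → Fin (l + 1)} (hα : Dec α) :
    eps α = (-1 : ℤˣ) ^ (∑ i, (α i : ℕ)) := by
  set m := ∑ i, (α i : ℕ) with hm
  clear_value m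
  induction m generalizing α with
  | zero =>
    -- α = 0, efun α = finSumFinEquiv
    have hz : ∀ i, (α i : ℕ) = 0 := by
      intro i
      have := Finset.sum_eq_zero_iff.mp hm.symm i (mem_univ i)
      omega
    have hef : efun α = fun p => finSumFinEquiv p := by
      funext p
      cases p with
      | inl c =>
        have hconj : conjP l (fun i => (α i : ℕ)) c.rev = 0 := by
          simp only [conjP, Finset.card_eq_zero]
          apply Finset.filter_eq_empty_iff.mpr
          intro i _
          simp [hz i]
        simp [efun, tfun, hconj, Fin.ext_iff]
      | inr c =>
        simp [efun, sfun, hz c, Fin.ext_iff]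
    have hbij : Function.Bijective (efun α) := by
      rw [hef]; exact finSumFinEquiv.bijective
    have : permOf α 1 1 = Equiv.refl _ := by
      ext z
      rw [permOf, dif_pos hbij]
      simp only [Equiv.trans_apply, Equiv.sumCongr_apply, Equiv.sumCongr_refl,
        Equiv.ofBijective_apply]
      rw [hef]
      simp
    simp [eps, this, Equiv.Perm.sign_refl]
  | succ m ih =>
    -- pick the last index attaining the maximal value a = α 0
    have hk : 0 < k := by
      by_contra hc
      push_neg at hc
      interval_cases k
      simp at hm
    set i0' : Fin k := ⟨0, hk⟩ with hi0'
    set a : ℕ := (α i0' : ℕ) with ha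
    have hmax : ∀ i, (α i : ℕ) ≤ a := fun i => hα i0' i (by simp [hi0', Fin.le_def])
    have hapos : 1 ≤ a := by
      by_contra hc
      push_neg at hc
      have : ∀ i, (α i : ℕ) = 0 := fun i => by have := hmax i; omega
      have : m + 1 = 0 := by rw [hm]; exact Finset.sum_eq_zero fun i _ => this i
      omega
    have hal : a ≤ l := by have := (α i0').isLt; omega
    set F : Finset (Fin k) := Finset.filter (fun i => (α i : ℕ) = a) Finset.univ with hF
    have hFne : F.Nonempty := ⟨i0', by simp [hF]; rfl⟩
    set i₀ : Fin k := F.max' hFne with hi₀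
    have hai₀ : (α i₀ : ℕ) = a := by
      have := F.max'_mem hFne
      simp [hF] at this
      exact this
    have hlt : ∀ i : Fin k, i₀ < i → (α i : ℕ) < a := by
      intro i hi
      have h1 : (α i : ℕ) ≤ a := hmax i
      have h2 : (α i : ℕ) ≠ a := by
        intro hc
        have : i ∈ F := by simp [hF, hc]
        exact absurd (F.le_max' i this) (not_le.mpr hi)
      omega
    have hge : ∀ i : Fin k, i ≤ i₀ → a ≤ (α i : ℕ) := by
      intro i hi
      have := hα i i₀ hi
      omega
    -- the updated tuple α'
    set a' : Fin (l + 1) := ⟨a - 1, by omega⟩ with ha'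
    set α' : Fin k → Fin (l + 1) := Function.update α i₀ a' with hα'
    have hα'app : ∀ i, i ≠ i₀ → α' i = α i := fun i hi => Function.update_of_ne hi _ _
    have hα'i₀ : (α' i₀ : ℕ) = a - 1 := by simp [hα']; rfl
    have hdec' : Dec α' := by
      intro i j hij
      rcases eq_or_ne i i₀ with rfl | hi <;> rcases eq_or_ne j i₀ with rfl | hj
      · exact le_refl _
      · have hij' : i₀ < j := lt_of_le_of_ne hij (Ne.symm hj)
        rw [hα'app j hj]
        have := hlt j hij'
        simp [Fin.le_def, hα'i₀]
        omega
      · rw [hα'app i hi]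
        have := hge i hij
        simp [Fin.le_def, hα'i₀]
        omega
      · rw [hα'app i hi, hα'app j hj]
        exact hα i j hij
    have hsum' : m = ∑ i, (α' i : ℕ) := by
      have h1 : ∑ i, (α' i : ℕ) = ∑ i ∈ univ.erase i₀, (α i : ℕ) + (a - 1) := by
        rw [← Finset.add_sum_erase _ _ (mem_univ i₀)]
        rw [hα'i₀]
        rw [add_comm]
        congr 1
        apply Finset.sum_congr rfl
        intro i hi
        rw [hα'app i (Finset.ne_of_mem_erase hi)]
      have h2 : m + 1 = (a : ℕ) + ∑ i ∈ univ.erase i₀, (α i : ℕ) := by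
        rw [hm, ← Finset.add_sum_erase _ _ (mem_univ i₀), hai₀]
      omega
    -- the swapped positions
    have hxlt : l + i₀ + 1 - a < l + k := by have := i₀.isLt; omega
    set x : Fin (l + k) := ⟨l + i₀ + 1 - a, hxlt⟩ with hx
    set x' : Fin (l + k) := ⟨l + i₀ - a, by omega⟩ with hx'
    have hxx' : x' ≠ x := by simp [hx, hx', Fin.ext_iff]; omega
    -- column index where t changes
    have hc₀lt : l - a < l := by omega
    set c₀ : Fin l := ⟨l - a, hc₀lt⟩ with hc₀
    have hc₀rev : (c₀.rev : ℕ) = a - 1 := by simp [Fin.rev, hc₀]; omega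
    have hc₀v : (c₀ : ℕ) = l - a := rfl
    have hxv : (x : ℕ) = l + i₀ + 1 - a := rfl
    have hx'v : (x' : ℕ) = l + i₀ - a := rfl
    -- conjP values
    have hconj_eq : ∀ j : Fin l, (j : ℕ) ≠ a - 1 →
        conjP l (fun i => (α' i : ℕ)) j = conjP l (fun i => (α i : ℕ)) j := by
      intro j hj
      simp only [conjP]
      congr 1
      apply Finset.filter_congr
      intro i _
      rcases eq_or_ne i i₀ with rfl | hi
      · simp only [hα'i₀, hai₀]
        constructor <;> intro h <;> omega
      · rw [hα'app i hi]
    have hconj_a : ∀ j : Fin l, (j : ℕ) = a - 1 →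
        conjP l (fun i => (α i : ℕ)) j = i₀ + 1 ∧
        conjP l (fun i => (α' i : ℕ)) j = i₀ := by
      intro j hj
      constructor
      · have : Finset.filter (fun i : Fin k => (j : ℕ) + 1 ≤ (α i : ℕ)) Finset.univ
            = Finset.Iic i₀ := by
          ext i
          simp only [Finset.mem_filter, Finset.mem_univ, true_and, Finset.mem_Iic]
          constructor
          · intro h
            by_contra hc
            push_neg at hc
            have := hlt i hc
            omega
          · intro h
            have := hge i h
            omega
        simp only [conjP, this, Fin.card_Iic]
      · have : Finset.filter (fun i : Fin k => (j : ℕ) + 1 ≤ (α' i : ℕ)) Finset.univ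
            = Finset.Iio i₀ := by
          ext i
          simp only [Finset.mem_filter, Finset.mem_univ, true_and, Finset.mem_Iio]
          rcases eq_or_ne i i₀ with rfl | hi
          · simp only [hα'i₀]
            constructor
            · intro h; omega
            · intro h; exact absurd rfl (ne_of_lt h)
          · rw [hα'app i hi]
            constructor
            · intro h
              rcases lt_or_ge i i₀ with h' | h'
              · exact h'
              · have := hlt i (lt_of_le_of_ne h' (Ne.symm hi))
                omega
            · intro h
              have := hge i h.le
              omega
        simp only [conjP, this, Fin.card_Iio]
    -- values of tfun and sfun at the special spots
    have htα : (tfun α c₀ : ℕ) = x := by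
      show conjP l (fun i => (α i : ℕ)) c₀.rev + (c₀ : ℕ) = (x : ℕ)
      rw [(hconj_a c₀.rev hc₀rev).1]
      omega
    have htα' : (tfun α' c₀ : ℕ) = x' := by
      show conjP l (fun i => (α' i : ℕ)) c₀.rev + (c₀ : ℕ) = (x' : ℕ)
      rw [(hconj_a c₀.rev hc₀rev).2]
      omega
    have htother : ∀ c : Fin l, c ≠ c₀ → tfun α' c = tfun α c := by
      intro c hc
      have : (c.rev : ℕ) ≠ a - 1 := by
        intro hcon
        apply hc
        have := c.rev.isLt
        simp [Fin.ext_iff, hc₀]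
        have hrr : (c : ℕ) = l - 1 - (c.rev : ℕ) := by simp [Fin.rev]; omega
        omega
      simp only [tfun, Fin.ext_iff]
      rw [hconj_eq c.rev this]
    have hsα : (sfun α i₀ : ℕ) = x' := by
      show l + (i₀ : ℕ) - (α i₀ : ℕ) = (x' : ℕ)
      omega
    have hsα' : (sfun α' i₀ : ℕ) = x := by
      show l + (i₀ : ℕ) - (α' i₀ : ℕ) = (x : ℕ)
      omega
    have hsother : ∀ i : Fin k, i ≠ i₀ → sfun α' i = sfun α i := by
      intro i hi
      simp only [sfun, Fin.ext_iff]
      rw [hα'app i hi]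
    -- the swap relation
    have hswap : ∀ p, efun α' p = Equiv.swap x' x (efun α p) := by
      have hbijα : Function.Bijective (efun α) := efun_bijective hα
      intro p
      cases p with
      | inl c =>
        rcases eq_or_ne c c₀ with rfl | hc
        · rw [show efun α (Sum.inl c₀) = x from Fin.ext htα]
          rw [Equiv.swap_apply_right]
          exact Fin.ext htα'
        · have h1 : tfun α c ≠ x := by
            intro hcon
            exact hc ((tfun_strictMono α).injective (hcon.trans (Fin.ext htα).symm))
          have h2 : tfun α c ≠ x' := by
            intro hcon
            have : efun α (Sum.inl c) = efun α (Sum.inr i₀) := by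
              show tfun α c = sfun α i₀
              rw [hcon]; exact (Fin.ext hsα).symm
            exact absurd (efun_injective hα this) (by simp)
          show tfun α' c = _
          rw [htother c hc]
          exact (Equiv.swap_apply_of_ne_of_ne h2 h1).symm
      | inr i =>
        rcases eq_or_ne i i₀ with rfl | hi
        · rw [show efun α (Sum.inr i₀) = x' from Fin.ext hsα]
          rw [Equiv.swap_apply_left]
          exact Fin.ext hsα'
        · have h1 : sfun α i ≠ x' := by
            intro hcon
            exact hi ((sfun_strictMono hα).injective (hcon.trans (Fin.ext hsα).symm))
          have h2 : sfun α i ≠ x := by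
            intro hcon
            have : efun α (Sum.inr i) = efun α (Sum.inl c₀) := by
              show sfun α i = tfun α c₀
              rw [hcon]; exact (Fin.ext htα).symm
            exact absurd (efun_injective hα this) (by simp)
          show sfun α' i = _
          rw [hsother i hi]
          exact (Equiv.swap_apply_of_ne_of_ne h1 h2).symm
    -- conclude on signs
    have hbijα : Function.Bijective (efun α) := efun_bijective hα
    have hbijα' : Function.Bijective (efun α') := efun_bijective hdec'
    have hperm : permOf α' 1 1 = (permOf α 1 1).trans (Equiv.swap x' x) := by
      ext z
      rw [permOf, permOf, dif_pos hbijα, dif_pos hbijα']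
      simp only [Equiv.trans_apply, Equiv.sumCongr_apply, Equiv.ofBijective_apply]
      rw [show (Sum.map (⇑(1 : Perm (Fin l))) (⇑(1 : Perm (Fin k)))
        (finSumFinEquiv.symm z)) = finSumFinEquiv.symm z by cases finSumFinEquiv.symm z <;> simp]
      exact congrArg Fin.val (hswap _)
    have : eps α' = - eps α := by
      simp only [eps, hperm]
      rw [Equiv.Perm.sign_trans]
      rw [Equiv.Perm.sign_swap hxx']
      simp
    have hihval := ih hdec' hsum'
    rw [this] at hihval
    have : eps α = -(-1 : ℤˣ) ^ m := by
      rw [← hihval]; simp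
    rw [this, pow_succ]
    simp


/-- the decreasing tuples -/
noncomputable def Adec (k l : ℕ) : Finset (Fin k → Fin (l + 1)) :=
  Finset.filter (fun α : Fin k → Fin (l + 1) => ∀ i j : Fin k, i ≤ j → α j ≤ α i) Finset.univ

lemma mem_Adec {α : Fin k → Fin (l + 1)} : α ∈ Adec k l ↔ Dec α := by
  simp [Adec, Dec]

/-- images of tfun and sfun are complementary -/
lemma image_tfun_eq_compl {α : Fin k → Fin (l + 1)} (hα : Dec α) :
    Finset.image (tfun α) Finset.univ = (Finset.image (sfun α) Finset.univ)ᶜ := by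
  have hdisj : Finset.image (tfun α) Finset.univ ⊆ (Finset.image (sfun α) Finset.univ)ᶜ := by
    intro z hz
    simp only [Finset.mem_image, Finset.mem_univ, true_and] at hz
    obtain ⟨c, rfl⟩ := hz
    rw [Finset.mem_compl]
    intro hc
    simp only [Finset.mem_image, Finset.mem_univ, true_and] at hc
    obtain ⟨c', hc'⟩ := hc
    have : efun α (Sum.inr c') = efun α (Sum.inl c) := hc'
    have := efun_injective hα this
    simp at this
  apply Finset.eq_of_subset_of_card_le hdisj
  rw [Finset.card_compl]
  rw [Finset.card_image_of_injective _ (tfun_strictMono α).injective,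
    Finset.card_image_of_injective _ (sfun_strictMono hα).injective]
  simp

section Extraction

variable (σ : Perm (Fin (l + k)))

noncomputable def TcOf : Finset (Fin (l + k)) :=
  Finset.image (fun b : Fin k => σ (finSumFinEquiv (Sum.inr b))) Finset.univ

lemma card_TcOf : (TcOf σ).card = k := by
  rw [TcOf, Finset.card_image_of_injective, Finset.card_univ, Fintype.card_fin]
  intro a b h
  simpa using finSumFinEquiv.injective (σ.injective h)

lemma card_TcOf_compl : (TcOf σ)ᶜ.card = l := by
  rw [Finset.card_compl, card_TcOf]
  simp

noncomputable def sEx : Fin k → Fin (l + k) := fun i => (TcOf σ).orderEmbOfFin (card_TcOf σ) i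

lemma sEx_strictMono : StrictMono (sEx σ) := ((TcOf σ).orderEmbOfFin (card_TcOf σ)).strictMono

lemma sEx_ge (i : Fin k) : (i : ℕ) ≤ sEx σ i := le_of_strictMono (sEx_strictMono σ) i

lemma sEx_le (i : Fin k) : (sEx σ i : ℕ) ≤ l + i := by
  have := apply_le_of_strictMono (sEx_strictMono σ) i
  omega

noncomputable def alphaEx : Fin k → Fin (l + 1) := fun i =>
  ⟨l + i - sEx σ i, by have := sEx_ge σ i; omega⟩

lemma alphaEx_dec : Dec (alphaEx σ) := by
  intro i j hij
  have hle : (i : ℕ) ≤ j := hij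
  have := gap (sEx_strictMono σ) ((j : ℕ) - i) i j (by omega)
  simp only [alphaEx, Fin.le_def]
  have := sEx_le σ i
  have := sEx_ge σ i
  omega

lemma sfun_alphaEx : sfun (alphaEx σ) = sEx σ := by
  funext i
  have h1 := sEx_ge σ i
  have h2 := sEx_le σ i
  simp only [sfun, alphaEx, Fin.ext_iff]
  omega

lemma image_sfun_alphaEx : Finset.image (sfun (alphaEx σ)) Finset.univ = TcOf σ := by
  rw [sfun_alphaEx]
  apply Finset.eq_of_subset_of_card_le
  · intro z hz
    simp only [Finset.mem_image, Finset.mem_univ, true_and] at hz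
    obtain ⟨i, rfl⟩ := hz
    exact Finset.orderEmbOfFin_mem _ _ _
  · rw [card_TcOf, Finset.card_image_of_injective _ (sEx_strictMono σ).injective]
    simp

lemma tfun_alphaEx : tfun (alphaEx σ) = fun a => (TcOf σ)ᶜ.orderEmbOfFin (card_TcOf_compl σ) a := by
  apply Finset.orderEmbOfFin_unique
  · intro a
    have : tfun (alphaEx σ) a ∈ Finset.image (tfun (alphaEx σ)) Finset.univ :=
      Finset.mem_image_of_mem _ (Finset.mem_univ a)
    rwa [image_tfun_eq_compl (alphaEx_dec σ), image_sfun_alphaEx] at this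
  · exact tfun_strictMono _

lemma mem_TcOf_compl (a : Fin l) : σ (finSumFinEquiv (Sum.inl a)) ∈ (TcOf σ)ᶜ := by
  rw [Finset.mem_compl]
  intro hc
  simp only [TcOf, Finset.mem_image, Finset.mem_univ, true_and] at hc
  obtain ⟨b, hb⟩ := hc
  have := finSumFinEquiv.injective (σ.injective hb)
  simp at this

noncomputable def perm1Ex : Perm (Fin l) :=
  Equiv.ofBijective
    (fun a => ((TcOf σ)ᶜ.orderIsoOfFin (card_TcOf_compl σ)).symm
      ⟨σ (finSumFinEquiv (Sum.inl a)), mem_TcOf_compl σ a⟩)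
    (by
      apply (Fintype.bijective_iff_injective_and_card _).mpr
      refine ⟨?_, rfl⟩
      intro a b h
      have := congrArg (((TcOf σ)ᶜ.orderIsoOfFin (card_TcOf_compl σ))) h
      simp only [OrderIso.apply_symm_apply, Subtype.mk.injEq] at this
      simpa using finSumFinEquiv.injective (σ.injective this))

noncomputable def perm2Ex : Perm (Fin k) :=
  Equiv.ofBijective
    (fun b => ((TcOf σ).orderIsoOfFin (card_TcOf σ)).symm
      ⟨σ (finSumFinEquiv (Sum.inr b)), by
        simp only [TcOf, Finset.mem_image, Finset.mem_univ, true_and]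
        exact ⟨b, rfl⟩⟩)
    (by
      apply (Fintype.bijective_iff_injective_and_card _).mpr
      refine ⟨?_, rfl⟩
      intro a b h
      have := congrArg (((TcOf σ).orderIsoOfFin (card_TcOf σ))) h
      simp only [OrderIso.apply_symm_apply, Subtype.mk.injEq] at this
      simpa using finSumFinEquiv.injective (σ.injective this))

/-- right inverse: rebuilding σ from its extraction -/
lemma permOf_extraction : permOf (alphaEx σ) (perm1Ex σ) (perm2Ex σ) = σ := by
  have hbij : Function.Bijective (efun (alphaEx σ)) := efun_bijective (alphaEx_dec σ)
  ext z
  obtain ⟨p, rfl⟩ := finSumFinEquiv.surjective z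
  rw [permOf_apply hbij]
  refine congrArg Fin.val ?_
  cases p with
  | inl a =>
    show tfun (alphaEx σ) (perm1Ex σ a) = _
    rw [tfun_alphaEx σ]
    show ((TcOf σ)ᶜ.orderEmbOfFin (card_TcOf_compl σ)) (perm1Ex σ a) = _
    rw [← Finset.coe_orderIsoOfFin_apply]
    show (((TcOf σ)ᶜ.orderIsoOfFin (card_TcOf_compl σ))
      (((TcOf σ)ᶜ.orderIsoOfFin (card_TcOf_compl σ)).symm ⟨σ (finSumFinEquiv (Sum.inl a)), _⟩) : _)
        = (σ (finSumFinEquiv (Sum.inl a)) : Fin (l + k))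
    rw [OrderIso.apply_symm_apply]
  | inr b =>
    show sfun (alphaEx σ) (perm2Ex σ b) = _
    rw [sfun_alphaEx σ]
    show ((TcOf σ).orderEmbOfFin (card_TcOf σ)) (perm2Ex σ b) = _
    rw [← Finset.coe_orderIsoOfFin_apply]
    show (((TcOf σ).orderIsoOfFin (card_TcOf σ))
      (((TcOf σ).orderIsoOfFin (card_TcOf σ)).symm ⟨σ (finSumFinEquiv (Sum.inr b)), _⟩) : _)
        = (σ (finSumFinEquiv (Sum.inr b)) : Fin (l + k))
    rw [OrderIso.apply_symm_apply]

end Extraction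

/-- left inverse: the extraction of `permOf α σ₁ σ₂` gives back `(α, σ₁, σ₂)` -/
lemma TcOf_permOf {α : Fin k → Fin (l + 1)} (hα : Dec α) (σ₁ : Perm (Fin l))
    (σ₂ : Perm (Fin k)) :
    TcOf (permOf α σ₁ σ₂) = Finset.image (sfun α) Finset.univ := by
  have hbij := efun_bijective hα
  unfold TcOf
  have : (fun b : Fin k => permOf α σ₁ σ₂ (finSumFinEquiv (Sum.inr b)))
      = fun b => sfun α (σ₂ b) := by
    funext b
    rw [permOf_apply hbij]
    rfl
  rw [this]
  ext z
  simp only [Finset.mem_image, Finset.mem_univ, true_and]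
  constructor
  · rintro ⟨b, rfl⟩; exact ⟨σ₂ b, rfl⟩
  · rintro ⟨b, rfl⟩; exact ⟨σ₂.symm b, by simp⟩

lemma sEx_permOf {α : Fin k → Fin (l + 1)} (hα : Dec α) (σ₁ : Perm (Fin l))
    (σ₂ : Perm (Fin k)) :
    sEx (permOf α σ₁ σ₂) = sfun α := by
  have : sfun α = fun i => (TcOf (permOf α σ₁ σ₂)).orderEmbOfFin (card_TcOf _) i := by
    apply Finset.orderEmbOfFin_unique
    · intro i
      rw [TcOf_permOf hα]
      exact Finset.mem_image_of_mem _ (Finset.mem_univ i)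
    · exact sfun_strictMono hα
  funext i
  show ((TcOf (permOf α σ₁ σ₂)).orderEmbOfFin (card_TcOf _)) i = sfun α i
  exact (congrFun this i).symm

lemma alphaEx_permOf {α : Fin k → Fin (l + 1)} (hα : Dec α) (σ₁ : Perm (Fin l))
    (σ₂ : Perm (Fin k)) :
    alphaEx (permOf α σ₁ σ₂) = α := by
  funext i
  have h := congrFun (sEx_permOf hα σ₁ σ₂) i
  have hval : (sEx (permOf α σ₁ σ₂) i : ℕ) = l + i - α i := by rw [h]; rfl
  have : (α i : ℕ) ≤ l := by have := (α i).isLt; omega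
  simp only [alphaEx, Fin.ext_iff, hval]
  omega

lemma perm1Ex_permOf {α : Fin k → Fin (l + 1)} (hα : Dec α) (σ₁ : Perm (Fin l))
    (σ₂ : Perm (Fin k)) :
    perm1Ex (permOf α σ₁ σ₂) = σ₁ := by
  have hbij := efun_bijective hα
  ext a
  set σ := permOf α σ₁ σ₂ with hσ
  have hmem := mem_TcOf_compl σ a
  have happ : σ (finSumFinEquiv (Sum.inl a)) = tfun α (σ₁ a) := by
    rw [hσ, permOf_apply hbij]; rfl
  have htf : tfun (alphaEx σ) = fun a' => (TcOf σ)ᶜ.orderEmbOfFin (card_TcOf_compl σ) a' :=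
    tfun_alphaEx σ
  rw [alphaEx_permOf hα σ₁ σ₂] at htf
  refine congrArg Fin.val ?_
  show ((TcOf σ)ᶜ.orderIsoOfFin (card_TcOf_compl σ)).symm ⟨σ (finSumFinEquiv (Sum.inl a)), _⟩ = σ₁ a
  rw [OrderIso.symm_apply_eq]
  apply Subtype.ext
  rw [Finset.coe_orderIsoOfFin_apply]
  rw [← congrFun htf (σ₁ a)]
  exact happ

lemma perm2Ex_permOf {α : Fin k → Fin (l + 1)} (hα : Dec α) (σ₁ : Perm (Fin l))
    (σ₂ : Perm (Fin k)) :
    perm2Ex (permOf α σ₁ σ₂) = σ₂ := by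
  have hbij := efun_bijective hα
  ext b
  set σ := permOf α σ₁ σ₂ with hσ
  have happ : σ (finSumFinEquiv (Sum.inr b)) = sfun α (σ₂ b) := by
    rw [hσ, permOf_apply hbij]; rfl
  have hsf := sEx_permOf hα σ₁ σ₂
  refine congrArg Fin.val ?_
  show ((TcOf σ).orderIsoOfFin (card_TcOf σ)).symm ⟨σ (finSumFinEquiv (Sum.inr b)), _⟩ = σ₂ b
  rw [OrderIso.symm_apply_eq]
  apply Subtype.ext
  rw [Finset.coe_orderIsoOfFin_apply]
  show σ (finSumFinEquiv (Sum.inr b)) = (sEx σ (σ₂ b) : Fin (l + k))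
  rw [hsf]
  exact happ


/-- generalized Laplace expansion of the block-column matrix `B`, indexed by partitions -/
theorem laplace {R : Type*} [CommRing R] (B : Matrix (Fin (l + k)) (Fin l ⊕ Fin k) R) :
    (Matrix.det (Matrix.of fun r c => B r (finSumFinEquiv.symm c)))
      = ∑ α ∈ Adec k l, ((eps α : ℤ) : R) *
          (Matrix.det (Matrix.of fun (a b : Fin l) => B (tfun α a) (Sum.inl b)) *
           Matrix.det (Matrix.of fun (a b : Fin k) => B (sfun α a) (Sum.inr b))) := by
  classical
  have middle : ∀ α ∈ Adec k l, ((eps α : ℤ) : R) *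
      (Matrix.det (Matrix.of fun (a b : Fin l) => B (tfun α a) (Sum.inl b)) *
       Matrix.det (Matrix.of fun (a b : Fin k) => B (sfun α a) (Sum.inr b)))
      = ∑ q : Perm (Fin l) × Perm (Fin k),
          ((Equiv.Perm.sign (permOf α q.1 q.2) : ℤ) : R) *
            ((∏ a, B (tfun α (q.1 a)) (Sum.inl a)) * (∏ b, B (sfun α (q.2 b)) (Sum.inr b))) := by
    intro α hα
    have hbij := efun_bijective (mem_Adec.mp hα)
    rw [Matrix.det_apply', Matrix.det_apply']
    rw [Finset.sum_mul_sum]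
    rw [← Finset.univ_product_univ, Finset.sum_product, Finset.mul_sum]
    apply Finset.sum_congr rfl
    intro σ₁ _
    rw [Finset.mul_sum]
    apply Finset.sum_congr rfl
    intro σ₂ _
    rw [sign_permOf hbij]
    have : ((((eps α * Equiv.Perm.sign σ₁ * Equiv.Perm.sign σ₂ : ℤˣ) : ℤ)) : R)
        = ((eps α : ℤ) : R) * (((Equiv.Perm.sign σ₁ : ℤ)) : R) * (((Equiv.Perm.sign σ₂ : ℤ)) : R) := by
      push_cast
      ring
    rw [this]
    simp only [Matrix.of_apply]
    ring
  rw [Finset.sum_congr rfl middle]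
  rw [Matrix.det_apply']
  rw [← Finset.sum_product']
  refine (Finset.sum_nbij' (i := fun p : (Fin k → Fin (l + 1)) × (Perm (Fin l) × Perm (Fin k)) =>
      permOf p.1 p.2.1 p.2.2)
    (j := fun σ => (alphaEx σ, perm1Ex σ, perm2Ex σ)) ?_ ?_ ?_ ?_ ?_).symm
  · intro p _
    exact Finset.mem_univ _
  · intro σ _
    rw [Finset.mem_product]
    exact ⟨mem_Adec.mpr (alphaEx_dec σ), Finset.mem_univ _⟩
  · rintro ⟨α, σ₁, σ₂⟩ hp
    rw [Finset.mem_product] at hp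
    have hα := mem_Adec.mp hp.1
    simp only
    rw [alphaEx_permOf hα, perm1Ex_permOf hα, perm2Ex_permOf hα]
  · intro σ _
    exact permOf_extraction σ
  · rintro ⟨α, σ₁, σ₂⟩ hp
    rw [Finset.mem_product] at hp
    have hα := mem_Adec.mp hp.1
    have hbij := efun_bijective hα
    simp only
    congr 1
    have hprod : ∏ i, (Matrix.of fun r c => B r (finSumFinEquiv.symm c)) (permOf α σ₁ σ₂ i) i
        = ∏ p : Fin l ⊕ Fin k, B (permOf α σ₁ σ₂ (finSumFinEquiv p)) p := by
      rw [← Equiv.prod_comp finSumFinEquiv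
        (fun z => (Matrix.of fun r c => B r (finSumFinEquiv.symm c)) (permOf α σ₁ σ₂ z) z)]
      apply Finset.prod_congr rfl
      intro p _
      simp
    rw [hprod, Fintype.prod_sum_type]
    congr 1
    · apply Finset.prod_congr rfl
      intro a _
      rw [permOf_apply hbij]
      rfl
    · apply Finset.prod_congr rfl
      intro b _
      rw [permOf_apply hbij]
      rfl


end Aux13

open Matrix

section Spec

variable (k l : ℕ)

noncomputable def Bmat : Matrix (Fin (l + k)) (Fin l ⊕ Fin k) (Rbig k l) :=
  Matrix.of fun r p => Sum.elim (fun a : Fin l => xe k l ((r : ℤ) - (a : ℤ)))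
    (fun b : Fin k => ye' k l ((r : ℤ) - (b : ℤ))) p

noncomputable def Smat : Matrix (Fin (l + k)) (Fin (l + k)) (Rbig k l) :=
  Matrix.of fun r c => Bmat k l r (finSumFinEquiv.symm c)

noncomputable def vvec : Fin (l + k) → Rbig k l :=
  fun c => Sum.elim (fun a : Fin l => yv k l ((a : ℕ) + 1) - yv' k l ((a : ℕ) + 1))
    (fun b : Fin k => xv k l ((b : ℕ) + 1) - xv' k l ((b : ℕ) + 1)) (finSumFinEquiv.symm c)

noncomputable def Fx (i : ℕ) : ℕ → Rbig k l :=
  fun a => xe k l ((i : ℤ) - 1 - (a : ℤ)) * (yv k l (a + 1) - yv' k l (a + 1))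

noncomputable def Fy (i : ℕ) : ℕ → Rbig k l :=
  fun b => ye' k l ((i : ℤ) - 1 - (b : ℤ)) * (xv k l (b + 1) - xv' k l (b + 1))

lemma yv_of_gt {j : ℕ} (h : l < j) : yv k l j = 0 := by
  rw [yv, dif_neg (by omega), dif_neg (by omega)]

lemma yv'_of_gt {j : ℕ} (h : l < j) : yv' k l j = 0 := by
  rw [yv', dif_neg (by omega), dif_neg (by omega)]

lemma xv_of_gt {j : ℕ} (h : k < j) : xv k l j = 0 := by
  rw [xv, dif_neg (by omega), dif_neg (by omega)]

lemma xv'_of_gt {j : ℕ} (h : k < j) : xv' k l j = 0 := by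
  rw [xv', dif_neg (by omega), dif_neg (by omega)]

lemma xe_of_nonneg {m : ℤ} (h : 0 ≤ m) : xe k l m = xv k l m.toNat := if_pos h

lemma xe_of_neg {m : ℤ} (h : m < 0) : xe k l m = 0 := if_neg (by omega)

lemma ye'_of_nonneg {m : ℤ} (h : 0 ≤ m) : ye' k l m = yv' k l m.toNat := if_pos h

lemma ye'_of_neg {m : ℤ} (h : m < 0) : ye' k l m = 0 := if_neg (by omega)

/-- first part of the row computation -/
lemma first_sum {i : ℕ} (hi1 : 1 ≤ i) (hik : i ≤ l + k) :
    ∑ j ∈ Finset.range (i + 1), xv k l j * (yv k l (i - j) - yv' k l (i - j))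
      = ∑ a : Fin l, xe k l ((i : ℤ) - 1 - (a : ℤ)) * (yv k l ((a : ℕ) + 1) - yv' k l ((a : ℕ) + 1)) := by
  have h1 : ∑ j ∈ Finset.range (i + 1), xv k l j * (yv k l (i - j) - yv' k l (i - j))
      = ∑ j ∈ Finset.range i, xv k l j * (yv k l (i - j) - yv' k l (i - j)) := by
    rw [Finset.sum_range_succ]
    have hy : yv k l (i - i) = 1 := by simp [yv]
    have hy' : yv' k l (i - i) = 1 := by simp [yv']
    rw [hy, hy']
    simp
  have h2 : ∑ j ∈ Finset.range i, xv k l j * (yv k l (i - j) - yv' k l (i - j))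
      = ∑ a ∈ Finset.range i, Fx k l i a := by
    rw [← Finset.sum_range_reflect]
    apply Finset.sum_congr rfl
    intro a ha
    rw [Finset.mem_range] at ha
    simp only [Fx]
    have e1 : i - (i - 1 - a) = a + 1 := by omega
    have e2 : xe k l ((i : ℤ) - 1 - (a : ℤ)) = xv k l (i - 1 - a) := by
      rw [xe_of_nonneg k l (by omega)]
      congr 1
      omega
    rw [e1, e2]
  have h3 : ∑ a ∈ Finset.range i, Fx k l i a = ∑ a ∈ Finset.range (l + k), Fx k l i a := by
    apply Finset.sum_subset (Finset.range_subset_range.mpr hik)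
    intro a _ ha
    rw [Finset.mem_range] at ha
    push_neg at ha
    simp only [Fx]
    have hz : xe k l ((i : ℤ) - 1 - (a : ℤ)) = 0 := xe_of_neg k l (by omega)
    simp only [hz, zero_mul]
  have h4 : ∑ a : Fin l, Fx k l i (a : ℕ) = ∑ a ∈ Finset.range (l + k), Fx k l i a := by
    rw [Fin.sum_univ_eq_sum_range]
    apply Finset.sum_subset (Finset.range_subset_range.mpr (by omega))
    intro a _ ha
    rw [Finset.mem_range] at ha
    push_neg at ha
    simp only [Fx]
    simp only [yv_of_gt k l (by omega : l < a + 1), yv'_of_gt k l (by omega : l < a + 1)]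
    simp
  rw [h1, h2, h3, ← h4]
  simp only [Fx]

/-- second part of the row computation -/
lemma second_sum {i : ℕ} (hi1 : 1 ≤ i) (hik : i ≤ l + k) :
    ∑ j ∈ Finset.range (i + 1), (xv k l j - xv' k l j) * yv' k l (i - j)
      = ∑ b : Fin k, ye' k l ((i : ℤ) - 1 - (b : ℤ)) * (xv k l ((b : ℕ) + 1) - xv' k l ((b : ℕ) + 1)) := by
  have h1 : ∑ j ∈ Finset.range (i + 1), (xv k l j - xv' k l j) * yv' k l (i - j)
      = ∑ b ∈ Finset.range i, (xv k l (b + 1) - xv' k l (b + 1)) * yv' k l (i - (b + 1)) := by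
    rw [Finset.sum_range_succ']
    have hx : xv k l 0 = 1 := by simp [xv]
    have hx' : xv' k l 0 = 1 := by simp [xv']
    rw [hx, hx']
    simp
  have h2 : ∑ b ∈ Finset.range i, (xv k l (b + 1) - xv' k l (b + 1)) * yv' k l (i - (b + 1))
      = ∑ b ∈ Finset.range i, Fy k l i b := by
    apply Finset.sum_congr rfl
    intro b hb
    rw [Finset.mem_range] at hb
    simp only [Fy]
    have e2 : ye' k l ((i : ℤ) - 1 - (b : ℤ)) = yv' k l (i - (b + 1)) := by
      rw [ye'_of_nonneg k l (by omega)]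
      congr 1
      omega
    rw [e2]
    ring
  have h3 : ∑ b ∈ Finset.range i, Fy k l i b = ∑ b ∈ Finset.range (l + k), Fy k l i b := by
    apply Finset.sum_subset (Finset.range_subset_range.mpr hik)
    intro b _ hb
    rw [Finset.mem_range] at hb
    push_neg at hb
    simp only [Fy]
    have hz : ye' k l ((i : ℤ) - 1 - (b : ℤ)) = 0 := ye'_of_neg k l (by omega)
    simp only [hz, zero_mul]
  have h4 : ∑ b : Fin k, Fy k l i (b : ℕ) = ∑ b ∈ Finset.range (l + k), Fy k l i b := by
    rw [Fin.sum_univ_eq_sum_range]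
    apply Finset.sum_subset (Finset.range_subset_range.mpr (by omega))
    intro b _ hb
    rw [Finset.mem_range] at hb
    push_neg at hb
    simp only [Fy]
    simp only [xv_of_gt k l (by omega : k < b + 1), xv'_of_gt k l (by omega : k < b + 1)]
    simp
  rw [h1, h2, h3, ← h4]
  simp only [Fy]

lemma Smat_mulVec_mem (r : Fin (l + k)) : (Smat k l *ᵥ vvec k l) r ∈ Ibig k l := by
  have hik : (r : ℕ) + 1 ≤ l + k := by have := r.isLt; omega
  have hval : (Smat k l *ᵥ vvec k l) r
      = SigXY k l (xv k l) (yv k l) ((r : ℕ) + 1) - SigXY k l (xv' k l) (yv' k l) ((r : ℕ) + 1) := by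
    have expand : (Smat k l *ᵥ vvec k l) r
        = (∑ a : Fin l, xe k l ((r : ℤ) - (a : ℤ)) * (yv k l ((a : ℕ) + 1) - yv' k l ((a : ℕ) + 1)))
          + ∑ b : Fin k, ye' k l ((r : ℤ) - (b : ℤ)) * (xv k l ((b : ℕ) + 1) - xv' k l ((b : ℕ) + 1)) := by
      show ∑ c : Fin (l + k), Smat k l r c * vvec k l c = _
      rw [← Equiv.sum_comp finSumFinEquiv (fun c => Smat k l r c * vvec k l c)]
      rw [Fintype.sum_sum_type]
      congr 1
      · apply Finset.sum_congr rfl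
        intro a _
        simp [Smat, Bmat, vvec]
      · apply Finset.sum_congr rfl
        intro b _
        simp [Smat, Bmat, vvec]
    have exp : SigXY k l (xv k l) (yv k l) ((r : ℕ) + 1) - SigXY k l (xv' k l) (yv' k l) ((r : ℕ) + 1)
        = (∑ j ∈ Finset.range ((r : ℕ) + 1 + 1), xv k l j * (yv k l ((r : ℕ) + 1 - j) - yv' k l ((r : ℕ) + 1 - j)))
          + ∑ j ∈ Finset.range ((r : ℕ) + 1 + 1), (xv k l j - xv' k l j) * yv' k l ((r : ℕ) + 1 - j) := by
      rw [SigXY, SigXY, ← Finset.sum_sub_distrib, ← Finset.sum_add_distrib]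
      apply Finset.sum_congr rfl
      intro j _
      ring
    rw [expand, exp]
    rw [first_sum k l (by omega) hik, second_sum k l (by omega) hik]
    apply congrArg₂ (· + ·) <;>
    · apply Finset.sum_congr rfl
      intro a _
      congr 2
      push_cast
      ring
  rw [hval]
  apply Ideal.subset_span
  refine ⟨(r : ℕ) + 1, ?_, rfl⟩
  constructor
  · omega
  · have := r.isLt; omega

lemma det_mul_vvec_mem (c : Fin (l + k)) :
    Matrix.det (Smat k l) * vvec k l c ∈ Ibig k l := by
  have h1 : ((Smat k l).adjugate *ᵥ (Smat k l *ᵥ vvec k l)) c ∈ Ibig k l := by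
    show ∑ r, (Smat k l).adjugate c r * (Smat k l *ᵥ vvec k l) r ∈ Ibig k l
    apply Ideal.sum_mem
    intro r _
    exact Ideal.mul_mem_left _ _ (Smat_mulVec_mem k l r)
  rw [Matrix.mulVec_mulVec, Matrix.adjugate_mul, Matrix.smul_mulVec,
    Matrix.one_mulVec] at h1
  simpa using h1

lemma minor1 (α : Fin k → Fin (l + 1)) :
    Matrix.det (fun a b : Fin l =>
        xe k l ((conjP l (fun i => (α i : ℕ)) a : ℤ) + (b : ℤ) - (a : ℤ)))
      = Matrix.det (Matrix.of fun (a b : Fin l) => Bmat k l (Aux13.tfun α a) (Sum.inl b)) := by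
  have hmat : (fun a b : Fin l =>
      xe k l ((conjP l (fun i => (α i : ℕ)) a : ℤ) + (b : ℤ) - (a : ℤ)))
      = (Matrix.of fun (a b : Fin l) => Bmat k l (Aux13.tfun α a) (Sum.inl b)).submatrix
          Fin.revPerm Fin.revPerm := by
    funext a b
    show xe k l _ = xe k l ((Aux13.tfun α a.rev : ℤ) - ((b.rev : ℕ) : ℤ))
    congr 1
    have hval : (Aux13.tfun α a.rev : ℕ)
        = conjP l (fun i => (α i : ℕ)) a + (a.rev : ℕ) := by
      show conjP l (fun i => (α i : ℕ)) a.rev.rev + (a.rev : ℕ) = _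
      rw [Fin.rev_rev]
    have hb := b.isLt
    have ha := a.isLt
    have harev : (a.rev : ℕ) = l - ((a : ℕ) + 1) := Fin.val_rev a
    have hbrev : (b.rev : ℕ) = l - ((b : ℕ) + 1) := Fin.val_rev b
    omega
  rw [hmat, Matrix.det_submatrix_equiv_self]

lemma minor2 (α : Fin k → Fin (l + 1)) :
    Matrix.det (fun a b : Fin k =>
        ye' k l (((l - (α a.rev : ℕ) : ℕ) : ℤ) + (b : ℤ) - (a : ℤ)))
      = Matrix.det (Matrix.of fun (a b : Fin k) => Bmat k l (Aux13.sfun α a) (Sum.inr b)) := by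
  have hmat : (fun a b : Fin k =>
      ye' k l (((l - (α a.rev : ℕ) : ℕ) : ℤ) + (b : ℤ) - (a : ℤ)))
      = (Matrix.of fun (a b : Fin k) => Bmat k l (Aux13.sfun α a) (Sum.inr b)).submatrix
          Fin.revPerm Fin.revPerm := by
    funext a b
    show ye' k l _ = ye' k l ((Aux13.sfun α a.rev : ℤ) - ((b.rev : ℕ) : ℤ))
    congr 1
    have hval : (Aux13.sfun α a.rev : ℕ) = l + (a.rev : ℕ) - (α a.rev : ℕ) := rfl
    have ha := a.isLt
    have hb := b.isLt
    have harev : (a.rev : ℕ) = k - ((a : ℕ) + 1) := Fin.val_rev a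
    have hbrev : (b.rev : ℕ) = k - ((b : ℕ) + 1) := Fin.val_rev b
    have hαle : (α a.rev : ℕ) < l + 1 := (α a.rev).isLt
    omega
  rw [hmat, Matrix.det_submatrix_equiv_self]

lemma fBig_eq : fBig k l = Matrix.det (Smat k l) := by
  rw [Smat, Aux13.laplace (Bmat k l), fBig]
  apply Finset.sum_congr rfl
  intro α hα
  have hdec : Aux13.Dec α := Aux13.mem_Adec.mp hα
  rw [Aux13.eps_eq hdec, minor1 k l α, minor2 k l α]
  have hcast : ((((-1 : ℤˣ) ^ (∑ i, (α i : ℕ)) : ℤˣ) : ℤ) : Rbig k l)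
      = (-1 : Rbig k l) ^ (∑ i, (α i : ℕ)) := by
    push_cast
    ring
  rw [hcast]
  ring

end Spec

/-- The map `Δ` with `Δ(1) = ∑_α (−1)^{|α|} π_α ⊗ π'_{\overline{α^*}}` is a bimodule map:
in the Koszul presentation, `(y_j − y'_j) f ∈ I` for all `j = 1,...,l`. -/
theorem stmt_13 (k l : ℕ) (hl : 1 ≤ l) (hkl : l ≤ k) (j : ℕ) (hj1 : 1 ≤ j) (hjl : j ≤ l) :
    (yv k l j - yv' k l j) * fBig k l ∈ Ibig k l := by
  have hjlt : j - 1 < l := by omega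
  have hv : vvec k l (finSumFinEquiv (Sum.inl ⟨j - 1, hjlt⟩)) = yv k l j - yv' k l j := by
    show Sum.elim _ _ (finSumFinEquiv.symm (finSumFinEquiv (Sum.inl (⟨j - 1, hjlt⟩ : Fin l)))) = _
    rw [Equiv.symm_apply_apply]
    show yv k l (j - 1 + 1) - yv' k l (j - 1 + 1) = _
    rw [show j - 1 + 1 = j by omega]
  have hmem := det_mul_vvec_mem k l (finSumFinEquiv (Sum.inl ⟨j - 1, hjlt⟩))
  rw [hv] at hmem
  rw [fBig_eq, mul_comm]
  exact hmem
end

section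
/- The following identity of formal power series in q and Laurent polynomials in t holds: ∑_{j=1}^{l} ∑_{s=0}^{j−1} ∑_{i=j}^{l} (−1)^{i−j+s} t^{−s−1} q^{(2l+1−2j+s)(s+1)} q^{i(i+1+2(k−l)) + j(j−1)} [j−1 choose s][i−1 choose i−j][l choose i] = − ∑_{i=1}^{l} (−1)^i q^{i(i+2k)} t^{−i} [l choose i], where all binomials are Gaussian binomials with quantum integer [m] = (1−q^{2m})/(1−q²). -/
/-- Quantum integer `[m] = 1 + q² + ... + q^{2(m-1)} = (1-q^{2m})/(1-q²)`. -/
noncomputable def qInt {K : Type*} [Field K] (q : K) (m : ℕ) : K :=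
  ∑ j ∈ Finset.range m, q ^ (2 * j)

/-- Quantum factorial `[m]! = [m][m-1]⋯[1]`. -/
noncomputable def qFact {K : Type*} [Field K] (q : K) (m : ℕ) : K :=
  ∏ j ∈ Finset.range m, qInt q (j + 1)

/-- Gaussian binomial coefficient `[n choose m] = [n]!/([m]![n-m]!)`. -/
noncomputable def qChoose {K : Type*} [Field K] (q : K) (n m : ℕ) : K :=
  qFact q n / (qFact q m * qFact q (n - m))

namespace Aux
open Finset
variable {K : Type*} [Field K] (q : K)

lemma qFact_zero : qFact q 0 = 1 := by simp [qFact]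

lemma qFact_succ (n : ℕ) : qFact q (n+1) = qFact q n * qInt q (n+1) := by
  simp [qFact, Finset.prod_range_succ]

lemma qFact_ne_zero (hq : ∀ m : ℕ, qInt q (m+1) ≠ 0) (n : ℕ) : qFact q n ≠ 0 :=
  Finset.prod_ne_zero_iff.2 (fun j _ => hq j)

lemma qInt_split {m n : ℕ} (h : m ≤ n) :
    qInt q (n+1) = qInt q (m+1) + q^(2*(m+1)) * qInt q (n-m) := by
  unfold qInt
  have hn : n + 1 = (m+1) + (n-m) := by omega
  rw [hn, Finset.sum_range_add, Finset.mul_sum]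
  congr 1
  refine Finset.sum_congr rfl fun x _ => ?_
  rw [← pow_add]
  congr 1
  ring

lemma qChoose_zero_right (hq : ∀ m : ℕ, qInt q (m+1) ≠ 0) (n : ℕ) :
    qChoose q n 0 = 1 := by
  unfold qChoose
  rw [qFact_zero]
  simp [div_self (qFact_ne_zero q hq n)]

lemma qChoose_self (hq : ∀ m : ℕ, qInt q (m+1) ≠ 0) (n : ℕ) :
    qChoose q n n = 1 := by
  unfold qChoose
  simp [qFact_zero, div_self (qFact_ne_zero q hq n)]

lemma qChoose_symm {m n : ℕ} (h : m ≤ n) :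
    qChoose q n (n - m) = qChoose q n m := by
  unfold qChoose
  rw [Nat.sub_sub_self h, mul_comm]

lemma pascal (hq : ∀ m : ℕ, qInt q (m+1) ≠ 0) {m n : ℕ} (h : m < n) :
    qChoose q (n+1) (m+1) = qChoose q n m + q^(2*(m+1)) * qChoose q n (m+1) := by
  have h1 : n + 1 - (m+1) = n - m := by omega
  have h2 : n - m = (n - (m+1)) + 1 := by omega
  unfold qChoose
  rw [h1, qFact_succ q n, h2, qFact_succ q (n - (m+1)), qFact_succ q m]
  have e1 : qFact q m ≠ 0 := qFact_ne_zero q hq m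
  have e2 : qFact q (n - (m+1)) ≠ 0 := qFact_ne_zero q hq _
  have e3 : qFact q n ≠ 0 := qFact_ne_zero q hq n
  have e4 : qInt q (m+1) ≠ 0 := hq m
  have e5 : qInt q ((n - (m+1)) + 1) ≠ 0 := hq _
  rw [qInt_split q (le_of_lt h)]
  have h3 : n - m = (n - (m+1)) + 1 := h2
  field_simp
  rw [← h3]


noncomputable def gb (q : K) : ℕ → ℕ → K
  | _, 0 => 1
  | 0, _+1 => 0
  | n+1, m+1 => gb q n m + q ^ (2*(m+1)) * gb q n (m+1)


@[simp] lemma gb_zero_right (n : ℕ) : gb q n 0 = 1 := by cases n <;> rfl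

@[simp] lemma gb_zero_succ (m : ℕ) : gb q 0 (m+1) = 0 := rfl

lemma gb_succ_succ (n m : ℕ) :
    gb q (n+1) (m+1) = gb q n m + q ^ (2*(m+1)) * gb q n (m+1) := rfl

lemma gb_eq_zero : ∀ {n m : ℕ}, n < m → gb q n m = 0 := by
  intro n
  induction n with
  | zero => intro m h; cases m with
    | zero => omega
    | succ m => simp
  | succ n ih =>
    intro m h
    cases m with
    | zero => omega
    | succ m =>
      rw [gb_succ_succ, ih (by omega), ih (by omega)]
      ring

@[simp] lemma gb_self (n : ℕ) : gb q n n = 1 := by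
  induction n with
  | zero => rfl
  | succ n ih => rw [gb_succ_succ, ih, gb_eq_zero q (by omega)]; ring

lemma gb_delta (n : ℕ) :
    ∑ x ∈ range (n+1), (-1:K)^x * q^(x*(x-1)) * gb q n x
      = if n = 0 then 1 else 0 := by
  cases n with
  | zero => simp
  | succ n =>
    rw [if_neg (Nat.succ_ne_zero n), Finset.sum_range_succ' _ (n+1)]
    set g : ℕ → K := fun y => (-1:K)^y * q^(y*(y+1)) * gb q n y with hgdef
    have key : ∀ x, ((-1:K)^(x+1) * q^((x+1)*((x+1)-1)) * gb q (n+1) (x+1))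
        = g (x+1) - g x := by
      intro x
      rw [gb_succ_succ, hgdef]
      simp only [Nat.add_sub_cancel]
      have e2 : (x+1)*(x+2) = (x+1)*x + 2*(x+1) := by ring
      rw [e2, pow_add, pow_succ]
      ring_nf
    rw [Finset.sum_congr rfl (fun x _ => key x), Finset.sum_range_sub g (n+1)]
    have hg0 : g 0 = 1 := by simp [hgdef]
    have hgn : g (n+1) = 0 := by
      rw [hgdef]; simp [gb_eq_zero q (Nat.lt_succ_self n)]
    rw [hg0, hgn]
    simp

end Aux

namespace Aux
open Finset
variable {K : Type*} [Field K] (q : K)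

lemma qChoose_eq_gb (hq : ∀ m : ℕ, qInt q (m+1) ≠ 0) :
    ∀ {n m : ℕ}, m ≤ n → qChoose q n m = gb q n m := by
  intro n
  induction n with
  | zero =>
    intro m h
    interval_cases m
    simp [qChoose_zero_right q hq]
  | succ n ih =>
    intro m h
    cases m with
    | zero => simp [qChoose_zero_right q hq]
    | succ m =>
      rcases eq_or_lt_of_le (Nat.succ_le_succ_iff.mp h) with he | hlt
      · subst he
        rw [qChoose_self q hq, gb_self]
      · rw [pascal q hq hlt, gb_succ_succ, ih (le_of_lt hlt), ih hlt]

lemma qChoose_mul (hq : ∀ m : ℕ, qInt q (m+1) ≠ 0) {s m n : ℕ}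
    (hs : s ≤ m) (hm : m ≤ n) :
    qChoose q n m * qChoose q m s = qChoose q n s * qChoose q (n-s) (m-s) := by
  unfold qChoose
  have h1 : n - s - (m - s) = n - m := by omega
  rw [h1]
  have e1 := qFact_ne_zero q hq m
  have e2 := qFact_ne_zero q hq s
  have e3 := qFact_ne_zero q hq (n-m)
  have e4 := qFact_ne_zero q hq (m-s)
  have e5 := qFact_ne_zero q hq (n-s)
  field_simp

lemma gb_mul (hq : ∀ m : ℕ, qInt q (m+1) ≠ 0) {s m n : ℕ}
    (hs : s ≤ m) (hm : m ≤ n) :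
    gb q n m * gb q m s = gb q n s * gb q (n-s) (m-s) := by
  rw [← qChoose_eq_gb q hq hm, ← qChoose_eq_gb q hq hs,
      ← qChoose_eq_gb q hq (le_trans hs hm),
      ← qChoose_eq_gb q hq (by omega : m - s ≤ n - s)]
  exact qChoose_mul q hq hs hm


lemma neg_one_pow_sub {n x : ℕ} (h : x ≤ n) : (-1:K)^(n-x) = (-1)^n * (-1)^x := by
  have h1 : (-1:K)^(n-x) * (-1)^x = (-1)^n := by
    rw [← pow_add]; congr 1; omega
  have h2 : (-1:K)^x * (-1)^x = 1 := by
    rw [← pow_add, ← two_mul, pow_mul]; norm_num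
  calc (-1:K)^(n-x) = (-1)^(n-x) * ((-1)^x * (-1)^x) := by rw [h2, mul_one]
    _ = (-1)^n * (-1)^x := by rw [← mul_assoc, h1]

lemma exp_helper (l s x E : ℕ) (h : 2*(s+1+x) ≤ 2*l+1) :
    (2*l+1-2*(s+1+x)+s)*(s+1) + (E + (s+1+x)*(s+x))
      = ((s+1)*(2*l-1) + E) + x*(x-1) := by
  cases x with
  | zero =>
    zify [show 2*(s+1+0) ≤ 2*l+1 from h, show 1 ≤ 2*l by omega]
    ring
  | succ x' =>
    rw [show (x'+1)-1 = x' by omega]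
    zify [show 2*(s+1+(x'+1)) ≤ 2*l+1 from h, show 1 ≤ 2*l by omega]
    ring

lemma triangle {M : Type*} [AddCommMonoid M] (l : ℕ) (f : ℕ → ℕ → M) :
    ∑ j ∈ Icc 1 l, ∑ i ∈ Icc j l, f j i = ∑ i ∈ Icc 1 l, ∑ j ∈ Icc 1 i, f j i := by
  have step1 : ∀ j ∈ Icc 1 l,
      ∑ i ∈ Icc j l, f j i = ∑ i ∈ Icc 1 l, if j ≤ i then f j i else 0 := by
    intro j hj
    rw [← Finset.sum_filter]
    congr 1
    ext i
    simp only [Finset.mem_Icc, Finset.mem_filter]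
    simp only [Finset.mem_Icc] at hj
    omega
  rw [Finset.sum_congr rfl step1, Finset.sum_comm]
  refine Finset.sum_congr rfl fun i hi => ?_
  rw [← Finset.sum_filter]
  congr 1
  ext j
  simp only [Finset.mem_Icc, Finset.mem_filter]
  simp only [Finset.mem_Icc] at hi
  omega

lemma jsum (q u : K) (hq : ∀ m : ℕ, qInt q (m+1) ≠ 0) (k l i s : ℕ)
    (hi1 : 1 ≤ i) (hil : i ≤ l) (hs : s < i) :
    ∑ j ∈ Icc (s+1) i,
        (-1:K)^(i-j+s) * u^(s+1) * q^((2*l+1-2*j+s)*(s+1)) *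
          q^(i*(i+1+2*(k-l)) + j*(j-1)) * gb q (j-1) s * gb q (i-1) (i-j) * gb q l i
      = ((-1:K)^(i-1) * u^(s+1) * q^((s+1)*(2*l-1) + i*(i+1+2*(k-l))) *
          gb q (i-1) s * gb q l i) * (if i-1-s = 0 then 1 else 0) := by
  rw [← Finset.Ico_add_one_right_eq_Icc, Finset.sum_Ico_eq_sum_range,
    show i+1-(s+1) = (i-1-s)+1 by omega]
  have key : ∀ x ∈ range ((i-1-s)+1),
      (-1:K)^(i-(s+1+x)+s) * u^(s+1) * q^((2*l+1-2*(s+1+x)+s)*(s+1)) *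
          q^(i*(i+1+2*(k-l)) + (s+1+x)*((s+1+x)-1)) * gb q ((s+1+x)-1) s *
          gb q (i-1) (i-(s+1+x)) * gb q l i
        = ((-1:K)^(i-1) * u^(s+1) * q^((s+1)*(2*l-1) + i*(i+1+2*(k-l))) *
            gb q (i-1) s * gb q l i) * ((-1:K)^x * q^(x*(x-1)) * gb q (i-1-s) x) := by
    intro x hx
    simp only [Finset.mem_range] at hx
    have hxi : s + 1 + x ≤ i := by omega
    rw [show (s+1+x)-1 = s+x by omega]
    have e_sign : (-1:K)^(i-(s+1+x)+s) = (-1:K)^(i-1) * (-1:K)^x := by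
      rw [show i-(s+1+x)+s = (i-1)-x by omega]
      exact neg_one_pow_sub (by omega)
    have e_sym : gb q (i-1) (i-(s+1+x)) = gb q (i-1) (s+x) := by
      rw [← qChoose_eq_gb q hq (by omega : i-(s+1+x) ≤ i-1),
        show i-(s+1+x) = (i-1)-(s+x) by omega,
        qChoose_symm q (by omega : s+x ≤ i-1),
        qChoose_eq_gb q hq (by omega : s+x ≤ i-1)]
    have e_mul : gb q (i-1) (s+x) * gb q (s+x) s = gb q (i-1) s * gb q (i-1-s) x := by
      have h := gb_mul q hq (show s ≤ s+x by omega) (show s+x ≤ i-1 by omega)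
      rw [show s+x-s = x by omega] at h
      rw [show i-1-s = i-1-s from rfl]
      exact h
    have e_pow : q^((2*l+1-2*(s+1+x)+s)*(s+1)) * q^(i*(i+1+2*(k-l)) + (s+1+x)*(s+x))
        = q^((s+1)*(2*l-1) + i*(i+1+2*(k-l))) * q^(x*(x-1)) := by
      rw [← pow_add, ← pow_add, exp_helper l s x _ (by omega)]
    have e_all : (q^((2*l+1-2*(s+1+x)+s)*(s+1)) * q^(i*(i+1+2*(k-l)) + (s+1+x)*(s+x)))
          * (gb q (i-1) (s+x) * gb q (s+x) s)
        = (q^((s+1)*(2*l-1) + i*(i+1+2*(k-l))) * q^(x*(x-1)))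
          * (gb q (i-1) s * gb q (i-1-s) x) := by
      rw [e_pow, e_mul]
    rw [e_sign, e_sym]
    linear_combination ((-1:K)^(i-1) * (-1:K)^x * u^(s+1) * gb q l i) * e_all
  rw [Finset.sum_congr rfl key, ← Finset.mul_sum, gb_delta]


lemma main (q u : K) (hq : ∀ m : ℕ, qInt q (m+1) ≠ 0) (k l : ℕ)
    (hl : 1 ≤ l) (hkl : l ≤ k) :
    ∑ j ∈ Icc 1 l, ∑ s ∈ range j, ∑ i ∈ Icc j l,
        (-1:K)^(i-j+s) * u^(s+1) * q^((2*l+1-2*j+s)*(s+1)) *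
          q^(i*(i+1+2*(k-l)) + j*(j-1)) *
          qChoose q (j-1) s * qChoose q (i-1) (i-j) * qChoose q l i
      = -∑ i ∈ Icc 1 l, (-1:K)^i * q^(i*(i+2*k)) * u^i * qChoose q l i := by
  calc
    ∑ j ∈ Icc 1 l, ∑ s ∈ range j, ∑ i ∈ Icc j l,
        (-1:K)^(i-j+s) * u^(s+1) * q^((2*l+1-2*j+s)*(s+1)) *
          q^(i*(i+1+2*(k-l)) + j*(j-1)) *
          qChoose q (j-1) s * qChoose q (i-1) (i-j) * qChoose q l i
      = ∑ j ∈ Icc 1 l, ∑ s ∈ range j, ∑ i ∈ Icc j l,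
          (-1:K)^(i-j+s) * u^(s+1) * q^((2*l+1-2*j+s)*(s+1)) *
            q^(i*(i+1+2*(k-l)) + j*(j-1)) *
            gb q (j-1) s * gb q (i-1) (i-j) * gb q l i := by
        refine Finset.sum_congr rfl fun j hj => Finset.sum_congr rfl fun s hs =>
          Finset.sum_congr rfl fun i hi => ?_
        simp only [Finset.mem_Icc] at hj hi
        simp only [Finset.mem_range] at hs
        rw [qChoose_eq_gb q hq (show s ≤ j-1 by omega),
          qChoose_eq_gb q hq (show i-j ≤ i-1 by omega),
          qChoose_eq_gb q hq hi.2]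
    _ = ∑ j ∈ Icc 1 l, ∑ s ∈ range l, ∑ i ∈ Icc j l,
          (-1:K)^(i-j+s) * u^(s+1) * q^((2*l+1-2*j+s)*(s+1)) *
            q^(i*(i+1+2*(k-l)) + j*(j-1)) *
            gb q (j-1) s * gb q (i-1) (i-j) * gb q l i := by
        refine Finset.sum_congr rfl fun j hj => ?_
        simp only [Finset.mem_Icc] at hj
        refine Finset.sum_subset (Finset.range_subset_range.2 hj.2) fun s _ hs => ?_
        simp only [Finset.mem_range] at hs
        refine Finset.sum_eq_zero fun i _ => ?_
        rw [gb_eq_zero q (show j-1 < s by omega)]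
        ring
    _ = ∑ j ∈ Icc 1 l, ∑ i ∈ Icc j l, ∑ s ∈ range l,
          (-1:K)^(i-j+s) * u^(s+1) * q^((2*l+1-2*j+s)*(s+1)) *
            q^(i*(i+1+2*(k-l)) + j*(j-1)) *
            gb q (j-1) s * gb q (i-1) (i-j) * gb q l i :=
        Finset.sum_congr rfl fun j _ => Finset.sum_comm
    _ = ∑ i ∈ Icc 1 l, ∑ j ∈ Icc 1 i, ∑ s ∈ range l,
          (-1:K)^(i-j+s) * u^(s+1) * q^((2*l+1-2*j+s)*(s+1)) *
            q^(i*(i+1+2*(k-l)) + j*(j-1)) *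
            gb q (j-1) s * gb q (i-1) (i-j) * gb q l i := triangle l _
    _ = ∑ i ∈ Icc 1 l, ∑ s ∈ range l, ∑ j ∈ Icc 1 i,
          (-1:K)^(i-j+s) * u^(s+1) * q^((2*l+1-2*j+s)*(s+1)) *
            q^(i*(i+1+2*(k-l)) + j*(j-1)) *
            gb q (j-1) s * gb q (i-1) (i-j) * gb q l i :=
        Finset.sum_congr rfl fun i _ => Finset.sum_comm
    _ = ∑ i ∈ Icc 1 l, ∑ s ∈ range i, ∑ j ∈ Icc 1 i,
          (-1:K)^(i-j+s) * u^(s+1) * q^((2*l+1-2*j+s)*(s+1)) *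
            q^(i*(i+1+2*(k-l)) + j*(j-1)) *
            gb q (j-1) s * gb q (i-1) (i-j) * gb q l i := by
        refine Finset.sum_congr rfl fun i hi => ?_
        simp only [Finset.mem_Icc] at hi
        refine (Finset.sum_subset (Finset.range_subset_range.2 hi.2) fun s _ hs => ?_).symm
        simp only [Finset.mem_range] at hs
        refine Finset.sum_eq_zero fun j hj => ?_
        simp only [Finset.mem_Icc] at hj
        rw [gb_eq_zero q (show j-1 < s by omega)]
        ring
    _ = ∑ i ∈ Icc 1 l, ∑ s ∈ range i, ∑ j ∈ Icc (s+1) i,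
          (-1:K)^(i-j+s) * u^(s+1) * q^((2*l+1-2*j+s)*(s+1)) *
            q^(i*(i+1+2*(k-l)) + j*(j-1)) *
            gb q (j-1) s * gb q (i-1) (i-j) * gb q l i := by
        refine Finset.sum_congr rfl fun i hi => Finset.sum_congr rfl fun s hs => ?_
        simp only [Finset.mem_range] at hs
        refine (Finset.sum_subset (Finset.Icc_subset_Icc (by omega) le_rfl)
          fun j hj hj' => ?_).symm
        simp only [Finset.mem_Icc] at hj
        simp only [Finset.mem_Icc, not_and, not_le] at hj'
        rw [gb_eq_zero q (show j-1 < s by omega)]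
        ring
    _ = ∑ i ∈ Icc 1 l, ∑ s ∈ range i,
          ((-1:K)^(i-1) * u^(s+1) * q^((s+1)*(2*l-1) + i*(i+1+2*(k-l))) *
            gb q (i-1) s * gb q l i) * (if i-1-s = 0 then 1 else 0) := by
        refine Finset.sum_congr rfl fun i hi => Finset.sum_congr rfl fun s hs => ?_
        simp only [Finset.mem_Icc] at hi
        simp only [Finset.mem_range] at hs
        exact jsum q u hq k l i s hi.1 hi.2 hs
    _ = ∑ i ∈ Icc 1 l,
          ((-1:K)^(i-1) * u^((i-1)+1) * q^(((i-1)+1)*(2*l-1) + i*(i+1+2*(k-l))) *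
            gb q (i-1) (i-1) * gb q l i) := by
        refine Finset.sum_congr rfl fun i hi => ?_
        simp only [Finset.mem_Icc] at hi
        have step : ∀ s ∈ range i,
            ((-1:K)^(i-1) * u^(s+1) * q^((s+1)*(2*l-1) + i*(i+1+2*(k-l))) *
              gb q (i-1) s * gb q l i) * (if i-1-s = 0 then 1 else 0)
            = if s = i-1 then
                ((-1:K)^(i-1) * u^(s+1) * q^((s+1)*(2*l-1) + i*(i+1+2*(k-l))) *
                  gb q (i-1) s * gb q l i) else 0 := by
          intro s hs
          simp only [Finset.mem_range] at hs
          by_cases h : s = i-1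
          · rw [if_pos h, if_pos (by omega), mul_one]
          · rw [if_neg h, if_neg (by omega), mul_zero]
        rw [Finset.sum_congr rfl step,
          Finset.sum_ite_eq' (range i) (i-1)
            (fun s => (-1:K)^(i-1) * u^(s+1) * q^((s+1)*(2*l-1) + i*(i+1+2*(k-l))) *
              gb q (i-1) s * gb q l i),
          if_pos (Finset.mem_range.2 (by omega))]
    _ = ∑ i ∈ Icc 1 l, -((-1:K)^i * q^(i*(i+2*k)) * u^i * qChoose q l i) := by
        refine Finset.sum_congr rfl fun i hi => ?_
        simp only [Finset.mem_Icc] at hi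
        rw [show (i-1)+1 = i by omega, gb_self,
          show i*(2*l-1) + i*(i+1+2*(k-l)) = i*(i+2*k) by
            zify [show 1 ≤ 2*l by omega, hkl]; ring,
          qChoose_eq_gb q hq hi.2,
          show (-1:K)^(i-1) = -(-1:K)^i by
            conv_rhs => rw [show i = (i-1)+1 by omega]
            rw [pow_succ]; ring]
        ring
    _ = -∑ i ∈ Icc 1 l, (-1:K)^i * q^(i*(i+2*k)) * u^i * qChoose q l i :=
        Finset.sum_neg_distrib _


lemma hq_spec (m : ℕ) : qInt (RatFunc.C (RatFunc.X : RatFunc ℚ)) (m+1) ≠ 0 := by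
  unfold qInt
  have h1 : ∑ j ∈ range (m+1), (RatFunc.C (RatFunc.X : RatFunc ℚ))^(2*j)
      = RatFunc.C (∑ j ∈ range (m+1), (RatFunc.X : RatFunc ℚ)^(2*j)) := by
    rw [map_sum]
    simp [map_pow]
  rw [h1]
  intro h
  have h2 : (∑ j ∈ range (m+1), (RatFunc.X : RatFunc ℚ)^(2*j)) = 0 :=
    RingHom.injective (RatFunc.C) (by rw [h, map_zero])
  have h3 : ∑ j ∈ range (m+1), (RatFunc.X : RatFunc ℚ)^(2*j)
      = algebraMap (Polynomial ℚ) (RatFunc ℚ) (∑ j ∈ range (m+1), (Polynomial.X : Polynomial ℚ)^(2*j)) := by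
    rw [map_sum]
    refine Finset.sum_congr rfl fun j _ => ?_
    rw [map_pow, RatFunc.algebraMap_X]
  rw [h3] at h2
  have h4 : (∑ j ∈ range (m+1), (Polynomial.X : Polynomial ℚ)^(2*j)) = 0 :=
    RatFunc.algebraMap_injective ℚ (by rw [h2, map_zero])
  have h5 := congrArg (Polynomial.eval 1) h4
  simp [Polynomial.eval_finset_sum] at h5
  exact Nat.cast_add_one_ne_zero m h5

end Aux

/-- The triple-sum collapse identity:
∑_{j=1}^{l} ∑_{s=0}^{j−1} ∑_{i=j}^{l} (−1)^{i−j+s} t^{−s−1} q^{(2l+1−2j+s)(s+1)}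
q^{i(i+1+2(k−l))+j(j−1)} [j−1 choose s][i−1 choose i−j][l choose i]
= −∑_{i=1}^{l} (−1)^i q^{i(i+2k)} t^{−i} [l choose i]. -/
theorem stmt_17 (k l : ℕ) (hl : 1 ≤ l) (hkl : l ≤ k) :
    let q : RatFunc (RatFunc ℚ) := RatFunc.C RatFunc.X
    let t : RatFunc (RatFunc ℚ) := RatFunc.X
    ∑ j ∈ Finset.Icc 1 l, ∑ s ∈ Finset.range j, ∑ i ∈ Finset.Icc j l,
        (-1 : RatFunc (RatFunc ℚ)) ^ (i - j + s) * (t⁻¹) ^ (s + 1) *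
          q ^ ((2 * l + 1 - 2 * j + s) * (s + 1)) *
          q ^ (i * (i + 1 + 2 * (k - l)) + j * (j - 1)) *
          qChoose q (j - 1) s * qChoose q (i - 1) (i - j) * qChoose q l i =
      -∑ i ∈ Finset.Icc 1 l,
        (-1 : RatFunc (RatFunc ℚ)) ^ i * q ^ (i * (i + 2 * k)) * (t⁻¹) ^ i *
          qChoose q l i := by
  intro q t
  exact Aux.main q (t⁻¹) Aux.hq_spec k l hl hkl
end
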